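/- arXiv:1306.2845 — 10 statements merged into one kernel-verified Lean document; each statement's English description precedes it below -/
import Mathlib

section
/- For every n ≥ 3 and every n×n invertible upper triangular (0,1)-matrix A, the sum of the entries of A⁻¹ is at most 2 + F_{n-1}, where F denotes the Fibonacci sequence with F_1 = F_2 = 1. -/
lemma key_inv (n : ℕ) (hn : 1 ≤ n) (x : Fin n → ℚ)
    (hx : ∀ i : Fin n, ∃ t : ℚ,
      -(∑ j ∈ Finset.univ.filter (fun j : Fin n => (i:ℕ) < (j:ℕ)), max (-(x j)) 0) ≤ t ∧
      t ≤ (∑ j ∈ Finset.univ.filter (fun j : Fin n => (i:ℕ) < (j:ℕ)), max (x j) 0) ∧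
      x i = 1 - t) :
    ∑ i, x i ≤ (Nat.fib (n-1) : ℚ) + 2 := by
  set P : ℕ → ℚ := fun k => ∑ i ∈ Finset.univ.filter (fun i : Fin n => k ≤ (i:ℕ)), max (x i) 0 with hP
  set N : ℕ → ℚ := fun k => ∑ i ∈ Finset.univ.filter (fun i : Fin n => k ≤ (i:ℕ)), max (-(x i)) 0 with hN
  have main : ∀ j, 1 ≤ j → j ≤ n →
      P (n-j) + N (n-j) ≤ (Nat.fib (j+1) : ℚ) ∧
      P (n-j) ≤ (Nat.fib j : ℚ) + 1 ∧
      N (n-j) + 1 ≤ (Nat.fib j : ℚ) ∧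
      P (n-j) - N (n-j) ≤ (Nat.fib (j-1) : ℚ) + 2 ∧
      1 ≤ P (n-j) := by
    intro j hj1
    induction j, hj1 using Nat.le_induction with
    | base =>
      intro _
      have hi : (n:ℕ) - 1 < n := by omega
      have hset : Finset.univ.filter (fun i : Fin n => n-1 ≤ (i:ℕ)) = {(⟨n-1, hi⟩ : Fin n)} := by
        ext i
        simp only [Finset.mem_filter, Finset.mem_univ, true_and, Finset.mem_singleton]
        constructor
        · intro h; apply Fin.ext; simp; omega
        · intro h; subst h; simp
      have hempty : Finset.univ.filter (fun j : Fin n => ((⟨n-1, hi⟩ : Fin n):ℕ) < (j:ℕ)) = ∅ := by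
        ext j
        simp only [Finset.mem_filter, Finset.mem_univ, true_and, Finset.notMem_empty, iff_false]
        have := j.isLt
        simp; omega
      obtain ⟨t, ht1, ht2, ht3⟩ := hx ⟨n-1, hi⟩
      rw [hempty] at ht1 ht2
      simp at ht1 ht2
      have hxl : x ⟨n-1, hi⟩ = 1 := by rw [ht3]; linarith
      have hPv : P (n-1) = 1 := by
        rw [hP]; simp only []; rw [hset, Finset.sum_singleton, hxl]; norm_num
      have hNv : N (n-1) = 0 := by
        rw [hN]; simp only []; rw [hset, Finset.sum_singleton, hxl]; norm_num
      rw [hPv, hNv]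
      norm_num
    | succ j hj ih =>
      intro hjn
      have ihv := ih (by omega)
      obtain ⟨iA, iB, iC, iD, iE⟩ := ihv
      have hk : n - (j+1) < n := by omega
      set k := n - (j+1) with hkdef
      have hk1 : k + 1 = n - j := by omega
      set i : Fin n := ⟨k, hk⟩ with hidef
      -- split the filter sets
      have hins : Finset.univ.filter (fun a : Fin n => k ≤ (a:ℕ)) =
          insert i (Finset.univ.filter (fun a : Fin n => k+1 ≤ (a:ℕ))) := by
        ext a
        simp only [Finset.mem_filter, Finset.mem_univ, true_and, Finset.mem_insert]
        constructor
        · intro h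
          rcases eq_or_lt_of_le h with h' | h'
          · left; apply Fin.ext; simp [hidef]; omega
          · right; omega
        · rintro (rfl | h)
          · simp [hidef]
          · omega
      have hnotmem : i ∉ Finset.univ.filter (fun a : Fin n => k+1 ≤ (a:ℕ)) := by
        simp [hidef]
      have hsplitP : P k = max (x i) 0 + P (k+1) := by
        rw [hP]; simp only []; rw [hins, Finset.sum_insert hnotmem]
      have hsplitN : N k = max (-(x i)) 0 + N (k+1) := by
        rw [hN]; simp only []; rw [hins, Finset.sum_insert hnotmem]
      obtain ⟨t, ht1, ht2, ht3⟩ := hx i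
      have hfilt : Finset.univ.filter (fun j : Fin n => ((i:Fin n):ℕ) < (j:ℕ)) =
          Finset.univ.filter (fun a : Fin n => k+1 ≤ (a:ℕ)) := by
        apply Finset.filter_congr
        intro a _
        simp [hidef]
      rw [hfilt] at ht1 ht2
      have ht1' : -(N (k+1)) ≤ t := ht1
      have ht2' : t ≤ P (k+1) := ht2
      rw [← hk1] at iA iB iC iD iE
      have hNnn : 0 ≤ N (k+1) :=
        Finset.sum_nonneg fun a _ => le_max_right _ _
      have hp : max (x i) 0 ≤ 1 + N (k+1) := by
        apply max_le
        · rw [ht3]; linarith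
        · linarith
      have hq : max (-(x i)) 0 ≤ P (k+1) - 1 := by
        apply max_le
        · rw [ht3]; linarith
        · linarith
      have hpq : max (x i) 0 = 0 ∨ max (-(x i)) 0 = 0 := by
        rcases le_total (x i) 0 with h | h
        · left; exact max_eq_right h
        · right; apply max_eq_right; linarith
      have hfib2 : (Nat.fib (j+2) : ℚ) = Nat.fib j + Nat.fib (j+1) := by
        rw [Nat.fib_add_two]; push_cast; ring
      have hfibm : (Nat.fib j : ℚ) ≤ Nat.fib (j+1) := by
        exact_mod_cast Nat.fib_mono (by omega)
      have hfibm' : (Nat.fib (j-1) : ℚ) ≤ Nat.fib j := by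
        exact_mod_cast Nat.fib_mono (by omega)
      have hjj : j + 1 - 1 = j := by omega
      rw [hjj]
      have hpnn : 0 ≤ max (x i) 0 := le_max_right _ _
      have hqnn : 0 ≤ max (-(x i)) 0 := le_max_right _ _
      rcases hpq with h0 | h0 <;>
        rw [hsplitP, hsplitN, h0] <;>
        refine ⟨by linarith, by linarith, by linarith, by linarith, by linarith⟩
  obtain ⟨_, _, _, hD, _⟩ := main n hn le_rfl
  have hnn : n - n = 0 := by omega
  rw [hnn] at hD
  have hfull : Finset.univ.filter (fun i : Fin n => 0 ≤ (i:ℕ)) = Finset.univ := by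
    simp
  have hsum : ∑ i, x i = P 0 - N 0 := by
    rw [hP, hN]; simp only []
    rw [hfull, ← Finset.sum_sub_distrib]
    apply Finset.sum_congr rfl
    intro a _
    rcases le_total (x a) 0 with h | h
    · rw [max_eq_right h, max_eq_left (by linarith)]; ring
    · rw [max_eq_left h, max_eq_right (by linarith)]; ring
  linarith

/-- For n ≥ 3 and A an n×n invertible upper triangular (0,1)-matrix,
S(A⁻¹) ≤ 2 + F_{n-1}. -/
theorem stmt_1 (n : ℕ) (hn : 3 ≤ n) (A : Matrix (Fin n) (Fin n) ℚ)
    (hut : ∀ i j : Fin n, (j : ℕ) < (i : ℕ) → A i j = 0)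
    (hdiag : ∀ i : Fin n, A i i = 1)
    (h01 : ∀ i j : Fin n, A i j = 0 ∨ A i j = 1) :
    ∑ i : Fin n, ∑ j : Fin n, A⁻¹ i j ≤ 2 + (Nat.fib (n - 1) : ℚ) := by
  have hbt : A.BlockTriangular id := by
    intro i j hij
    exact hut i j hij
  have hdet1 : A.det = 1 := by
    rw [Matrix.det_of_upperTriangular hbt]
    simp [hdiag]
  have hA1 : A * A⁻¹ = 1 := Matrix.mul_nonsing_inv A (by simp [hdet1])
  set x : Fin n → ℚ := fun i => ∑ j, A⁻¹ i j with hxdef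
  have hrow : ∀ i : Fin n, ∑ j, A i j * x j = 1 := by
    intro i
    calc ∑ j, A i j * x j = ∑ j, ∑ m, A i j * A⁻¹ j m := by
          simp [hxdef, Finset.mul_sum]
      _ = ∑ m, ∑ j, A i j * A⁻¹ j m := Finset.sum_comm
      _ = ∑ m, (A * A⁻¹) i m := by simp [Matrix.mul_apply]
      _ = 1 := by rw [hA1]; simp [Matrix.one_apply]
  have hx : ∀ i : Fin n, ∃ t : ℚ,
      -(∑ j ∈ Finset.univ.filter (fun j : Fin n => (i:ℕ) < (j:ℕ)), max (-(x j)) 0) ≤ t ∧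
      t ≤ (∑ j ∈ Finset.univ.filter (fun j : Fin n => (i:ℕ) < (j:ℕ)), max (x j) 0) ∧
      x i = 1 - t := by
    intro i
    refine ⟨∑ j ∈ Finset.univ.filter (fun j : Fin n => (i:ℕ) < (j:ℕ)), A i j * x j, ?_, ?_, ?_⟩
    · rw [← Finset.sum_neg_distrib]
      apply Finset.sum_le_sum
      intro j _
      have hm : 0 ≤ max (-(x j)) 0 := le_max_right _ _
      rcases h01 i j with h | h
      · rw [h, zero_mul]; linarith
      · rw [h, one_mul]
        have : -(x j) ≤ max (-(x j)) 0 := le_max_left _ _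
        linarith
    · apply Finset.sum_le_sum
      intro j _
      have hm : 0 ≤ max (x j) 0 := le_max_right _ _
      rcases h01 i j with h | h
      · rw [h, zero_mul]; linarith
      · rw [h, one_mul]; exact le_max_left _ _
    · have hsplit := Finset.sum_filter_add_sum_filter_not Finset.univ
        (fun j : Fin n => (i:ℕ) < (j:ℕ)) (fun j => A i j * x j)
      rw [hrow i] at hsplit
      have hrest : ∑ j ∈ Finset.univ.filter (fun j : Fin n => ¬ (i:ℕ) < (j:ℕ)),
          A i j * x j = A i i * x i := by
        apply Finset.sum_eq_single_of_mem i
        · simp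
        · intro j hj hne
          simp only [Finset.mem_filter, Finset.mem_univ, true_and, not_lt] at hj
          have : (j:ℕ) < (i:ℕ) := by
            rcases lt_or_eq_of_le hj with h | h
            · exact h
            · exact absurd (Fin.ext h) hne
          rw [hut i j this, zero_mul]
      rw [hrest, hdiag i, one_mul] at hsplit
      linarith
  have := key_inv n (by omega) x hx
  calc ∑ i : Fin n, ∑ j : Fin n, A⁻¹ i j = ∑ i, x i := rfl
    _ ≤ (Nat.fib (n-1) : ℚ) + 2 := this
    _ = 2 + (Nat.fib (n-1) : ℚ) := by ring
end

section
/- For every n ≥ 3 and every n×n invertible upper triangular (0,1)-matrix A, the sum of the entries of A⁻¹ is at least 2 − F_{n-1}. -/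
open Finset Matrix

private lemma fin_Ioi_castSucc {m : ℕ} (i : Fin m) :
    Finset.Ioi i.castSucc = Finset.Ici i.succ := by
  ext j
  simp [Fin.castSucc_lt_iff_succ_le]

private lemma key_invariant (m : ℕ) (a : Fin (m+1) → Fin (m+1) → ℚ)
    (ha : ∀ i j, a i j = 0 ∨ a i j = 1)
    (x : Fin (m+1) → ℚ)
    (hx : ∀ i, x i = 1 - ∑ j ∈ Finset.Ioi i, a i j * x j) :
    ∀ i : Fin (m+1),
      (∑ j ∈ Finset.Ici i, max (-x j) 0) + 1 ≤ (Nat.fib (m + 1 - (i : ℕ)) : ℚ) ∧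
      (∑ j ∈ Finset.Ici i, max (x j) 0) ≤ (Nat.fib (m + 1 - (i : ℕ)) : ℚ) + 1 ∧
      (∑ j ∈ Finset.Ici i, max (-x j) 0) + (∑ j ∈ Finset.Ici i, max (x j) 0)
        ≤ (Nat.fib (m + 2 - (i : ℕ)) : ℚ) := by
  intro i
  induction i using Fin.reverseInduction with
  | last =>
    have hIoi : Finset.Ioi (Fin.last m) = ∅ := by
      ext j; simp [not_lt.mpr (Fin.le_last j)]
    have hxl : x (Fin.last m) = 1 := by rw [hx, hIoi]; simp
    have hIci : Finset.Ici (Fin.last m) = {Fin.last m} := by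
      ext j; simp [Fin.last_le_iff]
    have e1 : m + 1 - ((Fin.last m : Fin (m+1)) : ℕ) = 1 := by simp
    have e2 : m + 2 - ((Fin.last m : Fin (m+1)) : ℕ) = 2 := by simp
    rw [hIci, e1, e2]
    simp [hxl]
  | cast i ih =>
    set N := ∑ j ∈ Finset.Ici i.succ, max (-x j) 0 with hN
    set P := ∑ j ∈ Finset.Ici i.succ, max (x j) 0 with hP
    set s := ∑ j ∈ Finset.Ici i.succ, a i.castSucc j * x j with hs
    set k := m - (i : ℕ) with hk
    have hk1 : 1 ≤ k := by omega
    have e1 : m + 1 - ((i.succ : Fin (m+1)) : ℕ) = k := by simp only [Fin.val_succ]; omega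
    have e2 : m + 2 - ((i.succ : Fin (m+1)) : ℕ) = k + 1 := by simp only [Fin.val_succ]; omega
    have e3 : m + 1 - ((i.castSucc : Fin (m+1)) : ℕ) = k + 1 := by
      simp only [Fin.coe_castSucc]; omega
    have e4 : m + 2 - ((i.castSucc : Fin (m+1)) : ℕ) = k + 2 := by
      simp only [Fin.coe_castSucc]; omega
    rw [e1, e2] at ih
    rw [e3, e4]
    obtain ⟨h1, h2, h3⟩ := ih
    -- bounds on s
    have hs1 : s ≤ P := by
      apply Finset.sum_le_sum
      intro j _
      rcases ha i.castSucc j with h | h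
      · rw [h, zero_mul]; exact le_max_right _ _
      · rw [h, one_mul]; exact le_max_left _ _
    have hs2 : -N ≤ s := by
      rw [hN, ← Finset.sum_neg_distrib]
      apply Finset.sum_le_sum
      intro j _
      rcases ha i.castSucc j with h | h
      · rw [h, zero_mul]; simp [le_max_right]
      · rw [h, one_mul]; rw [neg_le]
        exact le_trans (by simp) (le_max_left (-x j) 0)
    have hxc : x i.castSucc = 1 - s := by
      rw [hx i.castSucc, fin_Ioi_castSucc, hs]
    have hnotmem : i.castSucc ∉ Finset.Ici i.succ := by
      simp only [Finset.mem_Ici, Fin.le_def, Fin.val_succ, Fin.coe_castSucc]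
      omega
    have hIci : Finset.Ici i.castSucc = insert i.castSucc (Finset.Ici i.succ) := by
      ext j
      simp only [Finset.mem_Ici, Finset.mem_insert, Fin.ext_iff, Fin.le_def,
        Fin.val_succ, Fin.coe_castSucc]
      omega
    rw [hIci, Finset.sum_insert hnotmem, Finset.sum_insert hnotmem]
    have hnegx : max (-x i.castSucc) 0 = max (s - 1) 0 := by rw [hxc]; ring_nf
    have hposx : max (x i.castSucc) 0 = max (1 - s) 0 := by rw [hxc]
    rw [hnegx, hposx]
    have hf : (Nat.fib (k+2) : ℚ) = Nat.fib k + Nat.fib (k+1) := by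
      exact_mod_cast Nat.fib_add_two
    have hmono : (Nat.fib k : ℚ) ≤ Nat.fib (k+1) := by
      exact_mod_cast Nat.fib_le_fib_succ
    rcases le_total s 1 with hcase | hcase
    · rw [max_eq_right (by linarith : s - 1 ≤ 0), max_eq_left (by linarith : (0:ℚ) ≤ 1 - s)]
      refine ⟨by linarith, by linarith, by linarith⟩
    · rw [max_eq_left (by linarith : (0:ℚ) ≤ s - 1), max_eq_right (by linarith : 1 - s ≤ 0)]
      refine ⟨by linarith, by linarith, by linarith⟩

/-- For n ≥ 3 and A an n×n invertible upper triangular (0,1)-matrix,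
S(A⁻¹) ≥ 2 − F_{n-1}. -/
theorem stmt_2 (n : ℕ) (hn : 3 ≤ n) (A : Matrix (Fin n) (Fin n) ℚ)
    (hut : ∀ i j : Fin n, (j : ℕ) < (i : ℕ) → A i j = 0)
    (hdiag : ∀ i : Fin n, A i i = 1)
    (h01 : ∀ i j : Fin n, A i j = 0 ∨ A i j = 1) :
    2 - (Nat.fib (n - 1) : ℚ) ≤ ∑ i : Fin n, ∑ j : Fin n, A⁻¹ i j := by
  obtain ⟨m, rfl⟩ : ∃ m, n = m + 1 := ⟨n - 1, by omega⟩
  have hm : 2 ≤ m := by omega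
  have hbt : A.BlockTriangular id := fun i j h => hut i j h
  have hdet : A.det = 1 := by
    rw [Matrix.det_of_upperTriangular hbt]
    simp [hdiag]
  have hu : IsUnit A.det := by simp [hdet]
  set x : Fin (m+1) → ℚ := A⁻¹ *ᵥ (fun _ => 1) with hxdef
  have hAx : A *ᵥ x = fun _ => 1 := by
    rw [hxdef, Matrix.mulVec_mulVec, Matrix.mul_nonsing_inv A hu, Matrix.one_mulVec]
  have hx : ∀ i, x i = 1 - ∑ j ∈ Finset.Ioi i, A i j * x j := by
    intro i
    have h1 : ∑ j, A i j * x j = 1 := congrFun hAx i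
    have h2 : ∑ j ∈ Finset.Ici i, A i j * x j = ∑ j, A i j * x j := by
      apply Finset.sum_subset (Finset.subset_univ _)
      intro j _ hj
      have hji : (j : ℕ) < (i : ℕ) := by
        rw [Finset.mem_Ici] at hj
        exact not_le.mp hj
      rw [hut i j hji, zero_mul]
    have hnm : i ∉ Finset.Ioi i := by simp
    have hIci : Finset.Ici i = insert i (Finset.Ioi i) := by
      ext j
      simp only [Finset.mem_Ici, Finset.mem_insert, Finset.mem_Ioi]
      constructor
      · intro h; rcases eq_or_lt_of_le h with h' | h'
        · exact Or.inl h'.symm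
        · exact Or.inr h'
      · rintro (rfl | h)
        · exact le_refl _
        · exact le_of_lt h
    rw [hIci, Finset.sum_insert hnm, hdiag i, one_mul] at h2
    linarith [h1, h2]
  have hkey := key_invariant m (fun i j => A i j) h01 x hx ⟨1, by omega⟩
  have e1 : m + 1 - ((⟨1, by omega⟩ : Fin (m+1)) : ℕ) = m := by simp
  rw [e1] at hkey
  obtain ⟨h1, h2, h3⟩ := hkey
  set i₁ : Fin (m+1) := ⟨1, by omega⟩ with hi₁
  set N := ∑ j ∈ Finset.Ici i₁, max (-x j) 0 with hN
  set P := ∑ j ∈ Finset.Ici i₁, max (x j) 0 with hP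
  have hIoi0 : Finset.Ioi (0 : Fin (m+1)) = Finset.Ici i₁ := by
    ext j
    simp only [Finset.mem_Ioi, Finset.mem_Ici, Fin.lt_def, Fin.le_def, Fin.val_zero, hi₁]
    omega
  have hx0 : x 0 = 1 - ∑ j ∈ Finset.Ici i₁, A 0 j * x j := by
    rw [hx 0, hIoi0]
  have hs1 : ∑ j ∈ Finset.Ici i₁, A 0 j * x j ≤ P := by
    apply Finset.sum_le_sum
    intro j _
    rcases h01 0 j with h | h
    · rw [h, zero_mul]; exact le_max_right _ _
    · rw [h, one_mul]; exact le_max_left _ _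
  have hnotmem : (0 : Fin (m+1)) ∉ Finset.Ici i₁ := by
    simp only [Finset.mem_Ici, Fin.le_def, Fin.val_zero, hi₁]
    omega
  have huniv : (Finset.univ : Finset (Fin (m+1))) = insert 0 (Finset.Ici i₁) := by
    ext j
    simp only [Finset.mem_univ, Finset.mem_insert, Finset.mem_Ici, true_iff,
      Fin.ext_iff, Fin.le_def, Fin.val_zero, hi₁]
    omega
  have hsum : ∑ i : Fin (m+1), ∑ j : Fin (m+1), A⁻¹ i j = ∑ i, x i := by
    apply Finset.sum_congr rfl
    intro i _
    simp [hxdef, Matrix.mulVec, dotProduct, mul_one]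
  have htail : ∑ j ∈ Finset.Ici i₁, x j = P - N := by
    rw [hP, hN, ← Finset.sum_sub_distrib]
    apply Finset.sum_congr rfl
    intro j _
    exact (max_zero_sub_max_neg_zero_eq_self (x j)).symm
  have hfib : (Nat.fib (m + 1 - 1) : ℚ) = Nat.fib m := by norm_num
  rw [hsum, huniv, Finset.sum_insert hnotmem, htail, hfib]
  linarith [hx0, hs1, h1]
end

section
/- For every n ≥ 3, there exists an n×n invertible upper triangular (0,1)-matrix A such that the sum of the entries of A⁻¹ equals 2 + F_{n-1}. -/
open Finset Matrix

/-- "negative-type" index (reflected coordinates): parity matching n-1, in [2, n-3]. -/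
def qb (n b : ℕ) : Prop := b % 2 = (n-1) % 2 ∧ 2 ≤ b ∧ b + 3 ≤ n

instance (n b : ℕ) : Decidable (qb n b) := by unfold qb; infer_instance

/-- row-sum vector of the inverse, in reflected coordinates. -/
noncomputable def wv (n b : ℕ) : ℚ :=
  if b = 0 then 1 else if b = n - 1 then (Nat.fib (n-2) : ℚ)
  else if qb n b then -(Nat.fib b : ℚ) else (Nat.fib b : ℚ)

/-- matrix entry in reflected coordinates. -/
noncomputable def av (n a b : ℕ) : ℚ :=
  if a = b then 1 else if (b < a ∧ ¬(qb n a ↔ qb n b)) then 1 else 0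

lemma lemNe : ∀ M : ℕ, 1 ≤ M →
    ∑ b ∈ Finset.range M, (if (¬ b % 2 = M % 2 ∧ 2 ≤ b) then (Nat.fib b : ℚ) else 0)
      = (Nat.fib M : ℚ) - 1 := by
  intro M
  induction M using Nat.strong_induction_on with
  | _ M ih =>
    match M with
    | 0 => intro h; exact absurd h (by omega)
    | 1 => intro _; simp
    | 2 => intro _; rw [Finset.sum_range_succ, Finset.sum_range_succ]; norm_num
    | (k+3) =>
      intro _
      rw [Finset.sum_range_succ, Finset.sum_range_succ]
      have h1 : ∑ b ∈ Finset.range (k+1),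
          (if (¬ b % 2 = (k+3) % 2 ∧ 2 ≤ b) then (Nat.fib b : ℚ) else 0)
          = ∑ b ∈ Finset.range (k+1),
          (if (¬ b % 2 = (k+1) % 2 ∧ 2 ≤ b) then (Nat.fib b : ℚ) else 0) := by
        apply Finset.sum_congr rfl
        intro b _
        congr 1
        · simp only [eq_iff_iff]; constructor <;> intro h <;> exact ⟨by omega, h.2⟩
      rw [h1, ih (k+1) (by omega) (by omega)]
      have h2 : ¬(¬ (k+1) % 2 = (k+3) % 2 ∧ 2 ≤ k+1) := by omega
      have h3 : (¬ (k+2) % 2 = (k+3) % 2 ∧ 2 ≤ k+2) := by omega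
      rw [if_neg h2, if_pos h3]
      have : Nat.fib (k+3) = Nat.fib (k+1) + Nat.fib (k+2) := Nat.fib_add_two
      rw [this]; push_cast; ring

lemma rowlem (m a : ℕ) (ha : a < m+3) :
    ∑ b ∈ Finset.range (m+3), av (m+3) a b * wv (m+3) b = 1 := by
  have hsplit := Finset.sum_range_add_sum_Ico (fun b => av (m+3) a b * wv (m+3) b)
    (show a+1 ≤ m+3 by omega)
  have hIco : ∑ b ∈ Finset.Ico (a+1) (m+3), av (m+3) a b * wv (m+3) b = 0 := by
    apply Finset.sum_eq_zero; intro b hb; simp only [Finset.mem_Ico] at hb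
    have h0 : av (m+3) a b = 0 := by
      unfold av; rw [if_neg (by omega), if_neg (by push_neg; intro h; omega)]
    rw [h0, zero_mul]
  have hdiag : av (m+3) a a = 1 := by unfold av; simp
  rw [← hsplit, hIco, add_zero, Finset.sum_range_succ, hdiag, one_mul]
  by_cases hqa : qb (m+3) a
  · -- negative-type row
    have ha2 : 2 ≤ a ∧ a ≤ m ∧ a % 2 = (m+2) % 2 := by unfold qb at hqa; omega
    have hw : wv (m+3) a = -(Nat.fib a : ℚ) := by
      unfold wv; rw [if_neg (by omega), if_neg (by omega), if_pos hqa]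
    have key : ∀ b ∈ Finset.range a, av (m+3) a b * wv (m+3) b
        = (if (¬ b % 2 = a % 2 ∧ 2 ≤ b) then (Nat.fib b : ℚ) else 0)
          + ((if b = 0 then (1:ℚ) else 0) + (if b = 1 then (1:ℚ) else 0)) := by
      intro b hb; simp only [Finset.mem_range] at hb
      by_cases hqb : qb (m+3) b
      · have h0 : av (m+3) a b = 0 := by
          unfold av; rw [if_neg (by omega), if_neg (by push_neg; intro _; simp [hqa, hqb])]
        have hb2 : 2 ≤ b ∧ b % 2 = a % 2 := by unfold qb at hqb; omega
        rw [h0, zero_mul, if_neg (by omega), if_neg (by omega), if_neg (by omega)]; norm_num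
      · have h1 : av (m+3) a b = 1 := by
          unfold av; rw [if_neg (by omega), if_pos ⟨hb, by simp [hqa, hqb]⟩]
        rw [h1, one_mul]
        rcases Nat.lt_or_ge b 2 with hb2 | hb2
        · interval_cases b
          · rw [show wv (m+3) 0 = 1 by unfold wv; simp]; norm_num
          · rw [show wv (m+3) 1 = (Nat.fib 1 : ℚ) by
              unfold wv; rw [if_neg (by omega), if_neg (by omega), if_neg (by unfold qb; omega)]]
            norm_num
        · have hbq : ¬ b % 2 = (m+2) % 2 := by unfold qb at hqb; omega
          have hw2 : wv (m+3) b = (Nat.fib b : ℚ) := by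
            unfold wv; rw [if_neg (by omega), if_neg (by omega), if_neg hqb]
          rw [hw2, if_pos (by omega), if_neg (by omega), if_neg (by omega)]; ring
    rw [Finset.sum_congr rfl key, Finset.sum_add_distrib, Finset.sum_add_distrib,
      lemNe a (by omega),
      Finset.sum_ite_eq' (Finset.range a) 0 (fun _ => (1:ℚ)),
      Finset.sum_ite_eq' (Finset.range a) 1 (fun _ => (1:ℚ)),
      if_pos (Finset.mem_range.mpr (by omega)), if_pos (Finset.mem_range.mpr (by omega)), hw]
    ring
  · -- positive-type row
    by_cases ha0 : a = 0
    · subst ha0; rw [show wv (m+3) 0 = 1 by unfold wv; simp]; simp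
    by_cases ha1 : a = 1
    · subst ha1
      rw [Finset.sum_range_one]
      have h0 : av (m+3) 1 0 = 0 := by
        unfold av; rw [if_neg (by omega), if_neg (by push_neg; intro _; unfold qb; constructor <;> omega)]
      have hw1 : wv (m+3) 1 = (Nat.fib 1 : ℚ) := by
        unfold wv; rw [if_neg (by omega), if_neg (by omega), if_neg (by unfold qb; omega)]
      rw [h0, zero_mul, hw1]; norm_num
    by_cases hatop : a = m+2
    · subst hatop
      have hw : wv (m+3) (m+2) = (Nat.fib (m+1) : ℚ) := by
        unfold wv; rw [if_neg (by omega), if_pos (by omega)]; norm_num; congr 1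
      have key : ∀ b ∈ Finset.range (m+2), av (m+3) (m+2) b * wv (m+3) b
          = -(if (¬ b % 2 = (m+1) % 2 ∧ 2 ≤ b) then (Nat.fib b : ℚ) else 0) := by
        intro b hb; simp only [Finset.mem_range] at hb
        by_cases hqb : qb (m+3) b
        · have h1 : av (m+3) (m+2) b = 1 := by
            unfold av; rw [if_neg (by omega), if_pos ⟨hb, by simp [hqa, hqb]⟩]
          have hb2 : 2 ≤ b ∧ b % 2 = (m+2) % 2 := by unfold qb at hqb; omega
          have hw2 : wv (m+3) b = -(Nat.fib b : ℚ) := by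
            unfold wv; rw [if_neg (by omega), if_neg (by omega), if_pos hqb]
          rw [h1, one_mul, hw2, if_pos (by omega)]
        · have h0 : av (m+3) (m+2) b = 0 := by
            unfold av; rw [if_neg (by omega), if_neg (by push_neg; intro _; simp [hqa, hqb])]
          have hnb : ¬ (¬ b % 2 = (m+1) % 2 ∧ 2 ≤ b) := by
            intro hc; exact hqb (by unfold qb; omega)
          rw [h0, zero_mul, if_neg hnb]; norm_num
      rw [Finset.sum_congr rfl key, Finset.sum_neg_distrib, Finset.sum_range_succ,
        if_neg (by omega), add_zero, lemNe (m+1) (by omega), hw]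
      ring
    · -- generic 2 ≤ a ≤ m+1, not qb
      have hgen : 2 ≤ a ∧ a ≤ m+1 ∧ ¬ a % 2 = (m+2) % 2 := by unfold qb at hqa; omega
      have hw : wv (m+3) a = (Nat.fib a : ℚ) := by
        unfold wv; rw [if_neg (by omega), if_neg (by omega), if_neg hqa]
      have key : ∀ b ∈ Finset.range a, av (m+3) a b * wv (m+3) b
          = -(if (¬ b % 2 = a % 2 ∧ 2 ≤ b) then (Nat.fib b : ℚ) else 0) := by
        intro b hb; simp only [Finset.mem_range] at hb
        by_cases hqb : qb (m+3) b
        · have h1 : av (m+3) a b = 1 := by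
            unfold av; rw [if_neg (by omega), if_pos ⟨hb, by simp [hqa, hqb]⟩]
          have hb2 : 2 ≤ b ∧ b % 2 = (m+2) % 2 := by unfold qb at hqb; omega
          have hw2 : wv (m+3) b = -(Nat.fib b : ℚ) := by
            unfold wv; rw [if_neg (by omega), if_neg (by omega), if_pos hqb]
          rw [h1, one_mul, hw2, if_pos (by omega)]
        · have h0 : av (m+3) a b = 0 := by
            unfold av; rw [if_neg (by omega), if_neg (by push_neg; intro _; simp [hqa, hqb])]
          have hnb : ¬ (¬ b % 2 = a % 2 ∧ 2 ≤ b) := by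
            intro hc; exact hqb (by unfold qb; omega)
          rw [h0, zero_mul, if_neg hnb]; norm_num
      rw [Finset.sum_congr rfl key, Finset.sum_neg_distrib, lemNe a (by omega), hw]
      ring

lemma sumlem (m : ℕ) :
    ∑ b ∈ Finset.range (m+3), wv (m+3) b = 2 + (Nat.fib (m+2) : ℚ) := by
  rw [Finset.sum_range_succ]
  have hw : wv (m+3) (m+2) = (Nat.fib (m+1) : ℚ) := by
    unfold wv; rw [if_neg (by omega), if_pos (by omega)]; norm_num; congr 1
  have key : ∀ b ∈ Finset.range (m+2), wv (m+3) b
      = ((if b = 0 then (1:ℚ) else 0) + (if b = 1 then (1:ℚ) else 0))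
        + ((if (¬ b % 2 = (m+2) % 2 ∧ 2 ≤ b) then (Nat.fib b : ℚ) else 0)
          - (if (¬ b % 2 = (m+1) % 2 ∧ 2 ≤ b) then (Nat.fib b : ℚ) else 0)) := by
    intro b hb; simp only [Finset.mem_range] at hb
    rcases Nat.lt_or_ge b 2 with hb2 | hb2
    · interval_cases b
      · rw [show wv (m+3) 0 = 1 by unfold wv; simp]; norm_num
      · rw [show wv (m+3) 1 = (Nat.fib 1 : ℚ) by
          unfold wv; rw [if_neg (by omega), if_neg (by omega), if_neg (by unfold qb; omega)]]
        norm_num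
    · by_cases hp : b % 2 = (m+2) % 2
      · have hqb : qb (m+3) b := by unfold qb; omega
        have hw2 : wv (m+3) b = -(Nat.fib b : ℚ) := by
          unfold wv; rw [if_neg (by omega), if_neg (by omega), if_pos hqb]
        rw [hw2, if_neg (by omega), if_neg (by omega), if_neg (by omega), if_pos (by omega)]
        ring
      · have hqb : ¬ qb (m+3) b := by unfold qb; omega
        have hw2 : wv (m+3) b = (Nat.fib b : ℚ) := by
          unfold wv; rw [if_neg (by omega), if_neg (by omega), if_neg hqb]
        rw [hw2, if_neg (by omega), if_neg (by omega), if_pos (by omega), if_neg (by omega)]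
        ring
  rw [Finset.sum_congr rfl key, Finset.sum_add_distrib, Finset.sum_add_distrib,
    Finset.sum_sub_distrib,
    Finset.sum_ite_eq' (Finset.range (m+2)) 0 (fun _ => (1:ℚ)),
    Finset.sum_ite_eq' (Finset.range (m+2)) 1 (fun _ => (1:ℚ)),
    if_pos (Finset.mem_range.mpr (by omega)), if_pos (Finset.mem_range.mpr (by omega)),
    lemNe (m+2) (by omega), Finset.sum_range_succ, if_neg (by omega), add_zero,
    lemNe (m+1) (by omega), hw]
  ring

/-- For every n ≥ 3 there exists an invertible upper triangular (0,1)-matrix A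
with S(A⁻¹) = 2 + F_{n-1}. -/
theorem stmt_3 (n : ℕ) (hn : 3 ≤ n) :
    ∃ A : Matrix (Fin n) (Fin n) ℚ,
      (∀ i j : Fin n, (j : ℕ) < (i : ℕ) → A i j = 0) ∧
      (∀ i : Fin n, A i i = 1) ∧
      (∀ i j : Fin n, A i j = 0 ∨ A i j = 1) ∧
      ∑ i : Fin n, ∑ j : Fin n, A⁻¹ i j = 2 + (Nat.fib (n - 1) : ℚ) := by
  obtain ⟨m, rfl⟩ : ∃ m, n = m + 3 := ⟨n - 3, by omega⟩
  refine ⟨fun i j => av (m+3) (m + 2 - (i:ℕ)) (m + 2 - (j:ℕ)), ?_, ?_, ?_, ?_⟩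
  · intro i j hij
    have hi : (i:ℕ) < m+3 := i.isLt
    show av (m+3) (m + 2 - (i:ℕ)) (m + 2 - (j:ℕ)) = 0
    unfold av
    rw [if_neg (by omega), if_neg (by push_neg; intro h; omega)]
  · intro i
    show av (m+3) (m + 2 - (i:ℕ)) (m + 2 - (i:ℕ)) = 1
    unfold av; simp
  · intro i j
    show av (m+3) (m + 2 - (i:ℕ)) (m + 2 - (j:ℕ)) = 0 ∨
      av (m+3) (m + 2 - (i:ℕ)) (m + 2 - (j:ℕ)) = 1
    unfold av; split_ifs <;> simp
  · set A : Matrix (Fin (m+3)) (Fin (m+3)) ℚ :=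
      fun i j => av (m+3) (m + 2 - (i:ℕ)) (m + 2 - (j:ℕ)) with hA
    set w : Fin (m+3) → ℚ := fun i => wv (m+3) (m + 2 - (i:ℕ)) with hwdef
    have hA1 : A *ᵥ w = fun _ => 1 := by
      funext i
      show ∑ j : Fin (m+3), A i j * w j = 1
      have e1 : ∑ j : Fin (m+3), A i j * w j
          = ∑ j ∈ Finset.range (m+3),
              av (m+3) (m + 2 - (i:ℕ)) (m + 2 - j) * wv (m+3) (m + 2 - j) :=
        Fin.sum_univ_eq_sum_range
          (fun j => av (m+3) (m + 2 - (i:ℕ)) (m + 2 - j) * wv (m+3) (m + 2 - j)) (m+3)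
      have e2 : ∑ j ∈ Finset.range (m+3),
              av (m+3) (m + 2 - (i:ℕ)) (m + 2 - j) * wv (m+3) (m + 2 - j)
          = ∑ b ∈ Finset.range (m+3), av (m+3) (m + 2 - (i:ℕ)) b * wv (m+3) b :=
        Finset.sum_range_reflect (fun b => av (m+3) (m + 2 - (i:ℕ)) b * wv (m+3) b) (m+3)
      rw [e1, e2]
      exact rowlem m (m + 2 - (i:ℕ)) (by omega)
    have htri : A.BlockTriangular id := by
      intro i j hij
      have hij' : (j:ℕ) < (i:ℕ) := hij
      have hi : (i:ℕ) < m+3 := i.isLt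
      show av (m+3) (m + 2 - (i:ℕ)) (m + 2 - (j:ℕ)) = 0
      unfold av
      rw [if_neg (by omega), if_neg (by push_neg; intro h; omega)]
    have hdet : A.det = 1 := by
      rw [Matrix.det_of_upperTriangular htri]
      apply Finset.prod_eq_one
      intro i _
      show av (m+3) (m + 2 - (i:ℕ)) (m + 2 - (i:ℕ)) = 1
      unfold av; simp
    have hu : IsUnit A.det := by rw [hdet]; exact isUnit_one
    have hB : A⁻¹ *ᵥ (fun _ => (1:ℚ)) = w := by
      rw [← hA1, Matrix.mulVec_mulVec, Matrix.nonsing_inv_mul A hu, Matrix.one_mulVec]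
    have hrow : ∀ i : Fin (m+3), ∑ j : Fin (m+3), A⁻¹ i j = (A⁻¹ *ᵥ (fun _ => (1:ℚ))) i := by
      intro i; simp [Matrix.mulVec, dotProduct]
    calc ∑ i : Fin (m+3), ∑ j : Fin (m+3), A⁻¹ i j
        = ∑ i : Fin (m+3), (A⁻¹ *ᵥ (fun _ => (1:ℚ))) i :=
          Finset.sum_congr rfl (fun i _ => hrow i)
      _ = ∑ i : Fin (m+3), w i := by rw [hB]
      _ = ∑ i ∈ Finset.range (m+3), wv (m+3) (m + 2 - i) :=
          Fin.sum_univ_eq_sum_range (fun i => wv (m+3) (m + 2 - i)) (m+3)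
      _ = ∑ b ∈ Finset.range (m+3), wv (m+3) b :=
          Finset.sum_range_reflect (fun b => wv (m+3) b) (m+3)
      _ = 2 + (Nat.fib (m + 3 - 1) : ℚ) := by rw [sumlem m]; norm_num
end

section
/- For every n ≥ 3, there exists an n×n invertible upper triangular (0,1)-matrix A such that the sum of the entries of A⁻¹ equals 2 − F_{n-1}. -/
open Finset Matrix

def aq (m i j : ℕ) : ℚ :=
  if j = i then 1
  else if i < j ∧ i + 1 ≠ m ∧
      (if i = 0 ∨ i % 2 = 1 then j % 2 = 0 ∨ m ≤ j + 1 else j % 2 = 1 ∧ j + 1 < m)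
    then 1 else 0

def xq (m j : ℕ) : ℚ :=
  if j = 0 then -(Nat.fib (m-1) : ℚ)
  else if m ≤ j + 1 then 1
  else (-1)^j * (Nat.fib (m-j) : ℚ)

lemma aq_eq (m i j : ℕ) : aq m i j =
    if j = i then 1
    else if i < j ∧ i + 1 ≠ m ∧ ((i = 0 ∨ i % 2 = 1) ∧ (j % 2 = 0 ∨ m ≤ j + 1)
        ∨ ¬(i = 0 ∨ i % 2 = 1) ∧ j % 2 = 1 ∧ j + 1 < m) then 1 else 0 := by
  by_cases hP : i = 0 ∨ i % 2 = 1
  · simp only [aq, if_pos hP]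
    split_ifs <;> first | rfl | tauto
  · simp only [aq, if_neg hP]
    split_ifs <;> first | rfl | tauto

lemma aq_diag (m i : ℕ) : aq m i i = 1 := by simp [aq]

lemma aq_of_not_lt (m i j : ℕ) (h : ¬ i < j) (h2 : j ≠ i) : aq m i j = 0 := by
  rw [aq_eq, if_neg h2, if_neg (by tauto)]

lemma aq_row_id (m i j : ℕ) (h : i + 1 = m) (h2 : j ≠ i) : aq m i j = 0 := by
  rw [aq_eq, if_neg h2, if_neg (by omega)]

lemma aq_neg (m i j : ℕ) (hP : i = 0 ∨ i % 2 = 1) (h1 : i < j) (h2 : i + 1 ≠ m) :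
    aq m i j = if j % 2 = 0 ∨ m ≤ j + 1 then 1 else 0 := by
  rw [aq_eq, if_neg (by omega)]
  split_ifs <;> first | rfl | (exfalso; omega)

lemma aq_pos (m i j : ℕ) (hP : ¬(i = 0 ∨ i % 2 = 1)) (h1 : i < j) (h2 : i + 1 ≠ m) :
    aq m i j = if j % 2 = 1 ∧ j + 1 < m then 1 else 0 := by
  rw [aq_eq, if_neg (by omega)]
  split_ifs <;> first | rfl | (exfalso; omega)

lemma xq_zero (m : ℕ) : xq m 0 = -(Nat.fib (m-1) : ℚ) := by simp [xq]

lemma xq_top (m j : ℕ) (h : m ≤ j + 1) (h2 : j ≠ 0) : xq m j = 1 := by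
  simp only [xq]; rw [if_neg h2, if_pos h]

lemma xq_mid (m j : ℕ) (h1 : j ≠ 0) (h2 : j + 1 < m) :
    xq m j = (-1)^j * (Nat.fib (m-j) : ℚ) := by
  simp only [xq]; rw [if_neg h1, if_neg (by omega)]

lemma Gsum (k : ℕ) :
    ∑ i ∈ range k, (-1:ℚ)^(i+1) * (Nat.fib (k+1-i) : ℚ) = -(Nat.fib k : ℚ) := by
  induction k with
  | zero => simp
  | succ k ih =>
    rw [Finset.sum_range_succ']
    have h1 : ∀ i ∈ range k, (-1:ℚ)^(i+1+1) * (Nat.fib (k+1+1-(i+1)) : ℚ)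
        = -((-1:ℚ)^(i+1) * (Nat.fib (k+1-i) : ℚ)) := by
      intro i hi
      have h2 : k+1+1-(i+1) = k+1-i := by omega
      rw [h2, pow_succ]
      ring
    rw [Finset.sum_congr rfl h1, Finset.sum_neg_distrib, ih]
    have h3 : Nat.fib (k+1+1) = Nat.fib k + Nat.fib (k+1) := Nat.fib_add_two
    have h4 : k+1+1-0 = k+2 := rfl
    rw [h4, h3]
    push_cast
    ring

lemma sumx (k : ℕ) :
    ∑ j ∈ range (k+3), xq (k+2) j = 2 - (Nat.fib (k+2) : ℚ) := by
  rw [show k+3 = (k+2)+1 from rfl, Finset.sum_range_succ, Finset.sum_range_succ,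
    Finset.sum_range_succ']
  have h1 : ∀ i ∈ range k, xq (k+2) (i+1) = (-1:ℚ)^(i+1) * (Nat.fib (k+1-i) : ℚ) := by
    intro i hi
    simp only [mem_range] at hi
    simp only [xq]
    rw [if_neg (by omega), if_neg (by omega), show k+2-(i+1) = k+1-i from by omega]
  rw [Finset.sum_congr rfl h1, Gsum]
  have h2 : xq (k+2) 0 = -(Nat.fib (k+1) : ℚ) := by simp [xq]
  have h3 : xq (k+2) (k+1) = 1 := by simp only [xq]; rw [if_neg (by omega), if_pos (by omega)]
  have h4 : xq (k+2) (k+2) = 1 := by simp only [xq]; rw [if_neg (by omega), if_pos (by omega)]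
  rw [h2, h3, h4]
  have h5 : Nat.fib (k+2) = Nat.fib k + Nat.fib (k+1) := Nat.fib_add_two
  rw [h5]
  push_cast
  ring

lemma rowsum (m : ℕ) (hm : 2 ≤ m) : ∀ i, i ≤ m → ∑ j ∈ range (m+1), aq m i j * xq m j = 1 := by
  suffices H : ∀ d i, m - i = d → i ≤ m → ∑ j ∈ range (m+1), aq m i j * xq m j = 1 by
    exact fun i hi => H (m-i) i rfl hi
  intro d
  induction d using Nat.strong_induction_on with
  | _ d IH =>
  intro i hd hi
  by_cases h0 : i = m
  · -- last row
    subst h0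
    have hpt : ∀ j ∈ range (i+1), aq i i j * xq i j = if j = i then xq i j else 0 := by
      intro j hj
      simp only [mem_range] at hj
      by_cases hji : j = i
      · rw [if_pos hji, hji, aq_diag, one_mul]
      · rw [if_neg hji, aq_of_not_lt i i j (by omega) hji, zero_mul]
    rw [Finset.sum_congr rfl hpt, Finset.sum_ite_eq' (range (i+1)) i,
      if_pos (mem_range.mpr (by omega)), xq_top i i (by omega) (by omega)]
  by_cases h1 : i + 1 = m
  · -- identity row m-1
    have hpt : ∀ j ∈ range (m+1), aq m i j * xq m j = if j = i then xq m j else 0 := by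
      intro j hj
      by_cases hji : j = i
      · rw [if_pos hji, hji, aq_diag, one_mul]
      · rw [if_neg hji, aq_row_id m i j h1 hji, zero_mul]
    rw [Finset.sum_congr rfl hpt, Finset.sum_ite_eq' (range (m+1)) i,
      if_pos (mem_range.mpr (by omega)), xq_top m i (by omega) (by omega)]
  by_cases h2 : i = 0
  · subst h2
    by_cases hm2 : m = 2
    · subst hm2
      rw [show (2:ℕ)+1 = 3 from rfl, Finset.sum_range_succ, Finset.sum_range_succ,
        Finset.sum_range_succ, Finset.sum_range_zero,
        aq_diag, aq_neg 2 0 1 (Or.inl rfl) (by omega) (by omega),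
        aq_neg 2 0 2 (Or.inl rfl) (by omega) (by omega),
        if_pos (by omega), if_pos (by omega),
        xq_zero, xq_top 2 1 (by omega) (by omega), xq_top 2 2 (by omega) (by omega)]
      norm_num
    · -- m ≥ 3 : reduce row 0 to row 1
      have hm3 : 3 ≤ m := by omega
      have hpt : ∀ j ∈ range (m+1), aq m 0 j * xq m j
          = aq m 1 j * xq m j
            + ((if j = 0 then xq m j else 0) + (if j = 1 then -(xq m j) else 0)) := by
        intro j hj
        simp only [mem_range] at hj
        by_cases hj0 : j = 0
        · subst hj0
          rw [aq_diag, aq_of_not_lt m 1 0 (by omega) (by omega),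
            if_pos rfl, if_neg (by omega)]
          ring
        by_cases hj1 : j = 1
        · subst hj1
          rw [aq_neg m 0 1 (Or.inl rfl) (by omega) (by omega), if_neg (by omega),
            aq_diag, if_neg (by omega), if_pos rfl]
          ring
        · -- j ≥ 2
          rw [if_neg hj0, if_neg hj1,
            aq_neg m 0 j (Or.inl rfl) (by omega) (by omega),
            aq_neg m 1 j (Or.inr rfl) (by omega) (by omega)]
          ring
      rw [Finset.sum_congr rfl hpt, Finset.sum_add_distrib, Finset.sum_add_distrib,
        Finset.sum_ite_eq' (range (m+1)) 0, Finset.sum_ite_eq' (range (m+1)) 1,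
        if_pos (mem_range.mpr (by omega)), if_pos (mem_range.mpr (by omega)),
        IH (m-1) (by omega) 1 rfl (by omega),
        xq_zero, xq_mid m 1 (by omega) (by omega)]
      norm_num
  -- now 1 ≤ i, i+1 < m, i < m
  have hge1 : 1 ≤ i := by omega
  have hne : i + 1 ≠ m := h1
  by_cases hE : i + 2 = m
  · -- row m-2
    by_cases hpar : i % 2 = 1
    · -- odd: nonzero at i, i+1, i+2
      have hpt : ∀ j ∈ range (m+1), aq m i j * xq m j
          = (if j = i then xq m j else 0) + ((if j = i+1 then xq m j else 0)
            + (if j = i+2 then xq m j else 0)) := by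
        intro j hj
        simp only [mem_range] at hj
        by_cases hji : j = i
        · rw [hji, aq_diag, if_pos rfl, if_neg (by omega), if_neg (by omega)]; ring
        by_cases hji1 : j = i+1
        · rw [hji1, aq_neg m i (i+1) (Or.inr hpar) (by omega) hne, if_pos (by omega),
            if_neg (by omega), if_pos rfl, if_neg (by omega)]
          ring
        by_cases hji2 : j = i+2
        · rw [hji2, aq_neg m i (i+2) (Or.inr hpar) (by omega) hne, if_pos (by omega),
            if_neg (by omega), if_neg (by omega), if_pos rfl]
          ring
        · rw [aq_of_not_lt m i j (by omega) hji, if_neg hji, if_neg hji1, if_neg hji2]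
          ring
      rw [Finset.sum_congr rfl hpt, Finset.sum_add_distrib, Finset.sum_add_distrib,
        Finset.sum_ite_eq' (range (m+1)) i, Finset.sum_ite_eq' (range (m+1)) (i+1),
        Finset.sum_ite_eq' (range (m+1)) (i+2),
        if_pos (mem_range.mpr (by omega)), if_pos (mem_range.mpr (by omega)),
        if_pos (mem_range.mpr (by omega)),
        xq_mid m i (by omega) (by omega), xq_top m (i+1) (by omega) (by omega),
        xq_top m (i+2) (by omega) (by omega),
        show m - i = 2 from by omega]
      have : ((-1:ℚ))^i = -1 := Odd.neg_one_pow (Nat.odd_iff.mpr hpar)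
      rw [this]
      norm_num
    · -- even: only diagonal
      have hpt : ∀ j ∈ range (m+1), aq m i j * xq m j = if j = i then xq m j else 0 := by
        intro j hj
        simp only [mem_range] at hj
        by_cases hji : j = i
        · rw [if_pos hji, hji, aq_diag, one_mul]
        · rw [if_neg hji]
          rcases Nat.lt_or_ge i j with hlt | hge
          · rw [aq_pos m i j (by omega) hlt hne, if_neg (by omega), zero_mul]
          · rw [aq_of_not_lt m i j (by omega) hji, zero_mul]
      rw [Finset.sum_congr rfl hpt, Finset.sum_ite_eq' (range (m+1)) i,
        if_pos (mem_range.mpr (by omega)), xq_mid m i (by omega) (by omega),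
        show m - i = 2 from by omega]
      have : ((-1:ℚ))^i = 1 := Even.neg_one_pow (Nat.even_iff.mpr (by omega))
      rw [this]
      norm_num
  by_cases hF : i + 3 = m
  · -- row m-3
    by_cases hpar : i % 2 = 1
    · -- odd: nonzero at i, i+1, i+2, i+3
      have hpt : ∀ j ∈ range (m+1), aq m i j * xq m j
          = (if j = i then xq m j else 0) + ((if j = i+1 then xq m j else 0)
            + ((if j = i+2 then xq m j else 0) + (if j = i+3 then xq m j else 0))) := by
        intro j hj
        simp only [mem_range] at hj
        by_cases hji : j = i
        · rw [hji, aq_diag, if_pos rfl, if_neg (by omega), if_neg (by omega),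
            if_neg (by omega)]; ring
        by_cases hji1 : j = i+1
        · rw [hji1, aq_neg m i (i+1) (Or.inr hpar) (by omega) hne, if_pos (by omega),
            if_neg (by omega), if_pos rfl, if_neg (by omega), if_neg (by omega)]
          ring
        by_cases hji2 : j = i+2
        · rw [hji2, aq_neg m i (i+2) (Or.inr hpar) (by omega) hne, if_pos (by omega),
            if_neg (by omega), if_neg (by omega), if_pos rfl, if_neg (by omega)]
          ring
        by_cases hji3 : j = i+3
        · rw [hji3, aq_neg m i (i+3) (Or.inr hpar) (by omega) hne, if_pos (by omega),
            if_neg (by omega), if_neg (by omega), if_neg (by omega), if_pos rfl]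
          ring
        · rw [aq_of_not_lt m i j (by omega) hji, if_neg hji, if_neg hji1, if_neg hji2,
            if_neg hji3]
          ring
      rw [Finset.sum_congr rfl hpt, Finset.sum_add_distrib, Finset.sum_add_distrib,
        Finset.sum_add_distrib,
        Finset.sum_ite_eq' (range (m+1)) i, Finset.sum_ite_eq' (range (m+1)) (i+1),
        Finset.sum_ite_eq' (range (m+1)) (i+2), Finset.sum_ite_eq' (range (m+1)) (i+3),
        if_pos (mem_range.mpr (by omega)), if_pos (mem_range.mpr (by omega)),
        if_pos (mem_range.mpr (by omega)), if_pos (mem_range.mpr (by omega)),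
        xq_mid m i (by omega) (by omega), xq_mid m (i+1) (by omega) (by omega),
        xq_top m (i+2) (by omega) (by omega), xq_top m (i+3) (by omega) (by omega),
        show m - i = 3 from by omega, show m - (i+1) = 2 from by omega]
      have e1 : ((-1:ℚ))^i = -1 := Odd.neg_one_pow (Nat.odd_iff.mpr hpar)
      have e2 : ((-1:ℚ))^(i+1) = 1 := Even.neg_one_pow (Nat.even_iff.mpr (by omega))
      rw [e1, e2]
      norm_num [Nat.fib]
    · -- even: nonzero at i, i+1
      have hpt : ∀ j ∈ range (m+1), aq m i j * xq m j
          = (if j = i then xq m j else 0) + (if j = i+1 then xq m j else 0) := by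
        intro j hj
        simp only [mem_range] at hj
        by_cases hji : j = i
        · rw [hji, aq_diag, if_pos rfl, if_neg (by omega)]; ring
        by_cases hji1 : j = i+1
        · rw [hji1, aq_pos m i (i+1) (by omega) (by omega) hne, if_pos (by omega),
            if_neg (by omega), if_pos rfl]
          ring
        · rw [if_neg hji, if_neg hji1]
          rcases Nat.lt_or_ge i j with hlt | hge
          · rw [aq_pos m i j (by omega) hlt hne, if_neg (by omega)]; ring
          · rw [aq_of_not_lt m i j (by omega) hji]; ring
      rw [Finset.sum_congr rfl hpt, Finset.sum_add_distrib,
        Finset.sum_ite_eq' (range (m+1)) i, Finset.sum_ite_eq' (range (m+1)) (i+1),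
        if_pos (mem_range.mpr (by omega)), if_pos (mem_range.mpr (by omega)),
        xq_mid m i (by omega) (by omega), xq_mid m (i+1) (by omega) (by omega),
        show m - i = 3 from by omega, show m - (i+1) = 2 from by omega]
      have e1 : ((-1:ℚ))^i = 1 := Even.neg_one_pow (Nat.even_iff.mpr (by omega))
      have e2 : ((-1:ℚ))^(i+1) = -1 := Odd.neg_one_pow (Nat.odd_iff.mpr (by omega))
      rw [e1, e2]
      norm_num [Nat.fib]
  · -- generic step: i ≥ 1, i + 4 ≤ m
    have hgen : i + 4 ≤ m := by omega
    have haux : ∀ j, i + 2 < j → aq m i j = aq m (i+2) j := by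
      intro j hj
      by_cases hpar : i % 2 = 1
      · rw [aq_neg m i j (Or.inr hpar) (by omega) (by omega),
          aq_neg m (i+2) j (Or.inr (by omega)) (by omega) (by omega)]
      · rw [aq_pos m i j (by omega) (by omega) (by omega),
          aq_pos m (i+2) j (by omega) (by omega) (by omega)]
    have haq1 : aq m i (i+1) = 1 := by
      by_cases hpar : i % 2 = 1
      · rw [aq_neg m i (i+1) (Or.inr hpar) (by omega) (by omega), if_pos (by omega)]
      · rw [aq_pos m i (i+1) (by omega) (by omega) (by omega), if_pos (by omega)]
    have haq2 : aq m i (i+2) = 0 := by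
      by_cases hpar : i % 2 = 1
      · rw [aq_neg m i (i+2) (Or.inr hpar) (by omega) (by omega), if_neg (by omega)]
      · rw [aq_pos m i (i+2) (by omega) (by omega) (by omega), if_neg (by omega)]
    have hpt : ∀ j ∈ range (m+1), aq m i j * xq m j
        = aq m (i+2) j * xq m j + ((if j = i then xq m j else 0)
          + ((if j = i+1 then xq m j else 0) + (if j = i+2 then -(xq m j) else 0))) := by
      intro j hj
      simp only [mem_range] at hj
      by_cases hji : j = i
      · rw [hji, aq_diag, aq_of_not_lt m (i+2) i (by omega) (by omega),
          if_pos rfl, if_neg (by omega), if_neg (by omega)]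
        ring
      by_cases hji1 : j = i+1
      · rw [hji1, haq1, aq_of_not_lt m (i+2) (i+1) (by omega) (by omega),
          if_neg (by omega), if_pos rfl, if_neg (by omega)]
        ring
      by_cases hji2 : j = i+2
      · rw [hji2, haq2, aq_diag, if_neg (by omega), if_neg (by omega), if_pos rfl]
        ring
      · rw [if_neg hji, if_neg hji1, if_neg hji2]
        rcases Nat.lt_or_ge (i+2) j with hlt | hge
        · rw [haux j hlt]; ring
        · rw [aq_of_not_lt m i j (by omega) hji,
            aq_of_not_lt m (i+2) j (by omega) hji2]
          ring
    rw [Finset.sum_congr rfl hpt, Finset.sum_add_distrib, Finset.sum_add_distrib,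
      Finset.sum_add_distrib,
      Finset.sum_ite_eq' (range (m+1)) i, Finset.sum_ite_eq' (range (m+1)) (i+1),
      Finset.sum_ite_eq' (range (m+1)) (i+2),
      if_pos (mem_range.mpr (by omega)), if_pos (mem_range.mpr (by omega)),
      if_pos (mem_range.mpr (by omega)),
      IH (m-(i+2)) (by omega) (i+2) rfl (by omega),
      xq_mid m i (by omega) (by omega), xq_mid m (i+1) (by omega) (by omega),
      xq_mid m (i+2) (by omega) (by omega)]
    have ht : m - i = (m - (i+2)) + 2 := by omega
    have ht1 : m - (i+1) = (m - (i+2)) + 1 := by omega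
    rw [ht, ht1, Nat.fib_add_two, pow_succ ((-1:ℚ)) (i+1), pow_succ ((-1:ℚ)) i]
    push_cast
    ring


/-- For every n ≥ 3 there exists an invertible upper triangular (0,1)-matrix A
with S(A⁻¹) = 2 − F_{n-1}. -/
theorem stmt_4 (n : ℕ) (hn : 3 ≤ n) :
    ∃ A : Matrix (Fin n) (Fin n) ℚ,
      (∀ i j : Fin n, (j : ℕ) < (i : ℕ) → A i j = 0) ∧
      (∀ i : Fin n, A i i = 1) ∧
      (∀ i j : Fin n, A i j = 0 ∨ A i j = 1) ∧
      ∑ i : Fin n, ∑ j : Fin n, A⁻¹ i j = 2 - (Nat.fib (n - 1) : ℚ) := by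
  obtain ⟨k, rfl⟩ : ∃ k, n = k + 3 := ⟨n - 3, by omega⟩
  set m : ℕ := k + 2 with hmdef
  set A : Matrix (Fin (k+3)) (Fin (k+3)) ℚ :=
    Matrix.of (fun i j : Fin (k+3) => aq m (i : ℕ) (j : ℕ)) with hA
  have hApply : ∀ i j : Fin (k+3), A i j = aq m (i : ℕ) (j : ℕ) := fun i j => rfl
  have hlower : ∀ i j : Fin (k+3), (j : ℕ) < (i : ℕ) → A i j = 0 := by
    intro i j hji
    rw [hApply]
    exact aq_of_not_lt m _ _ (by omega) (by omega)
  have hdiag : ∀ i : Fin (k+3), A i i = 1 := fun i => aq_diag m i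
  have h01 : ∀ i j : Fin (k+3), A i j = 0 ∨ A i j = 1 := by
    intro i j
    rw [hApply, aq_eq]
    split_ifs <;> simp
  refine ⟨A, hlower, hdiag, h01, ?_⟩
  -- determinant and invertibility
  have hbt : A.BlockTriangular id := by
    intro i j hij
    exact hlower i j hij
  have hdet : A.det = 1 := by
    rw [Matrix.det_of_upperTriangular hbt]
    exact Finset.prod_eq_one (fun i _ => hdiag i)
  have hu : IsUnit A.det := by rw [hdet]; exact isUnit_one
  -- the vector x with A x = 1
  have hx : A *ᵥ (fun j : Fin (k+3) => xq m (j : ℕ)) = fun _ => 1 := by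
    funext i
    show ∑ j : Fin (k+3), A i j * xq m (j : ℕ) = 1
    have : ∑ j : Fin (k+3), A i j * xq m (j : ℕ)
        = ∑ j ∈ Finset.range (k+3), aq m (i : ℕ) j * xq m j :=
      Fin.sum_univ_eq_sum_range (fun j => aq m (i : ℕ) j * xq m j) (k+3)
    rw [this]
    exact rowsum m (by omega) (i : ℕ) (by omega)
  have hsolve : (A⁻¹ *ᵥ fun _ => (1:ℚ)) = fun j : Fin (k+3) => xq m (j : ℕ) := by
    rw [← hx, Matrix.mulVec_mulVec, Matrix.nonsing_inv_mul A hu, Matrix.one_mulVec]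
  have hstep : ∀ i : Fin (k+3), ∑ j : Fin (k+3), A⁻¹ i j = xq m (i : ℕ) := by
    intro i
    have : (A⁻¹ *ᵥ fun _ => (1:ℚ)) i = xq m (i : ℕ) := by rw [hsolve]
    rw [← this]
    simp [Matrix.mulVec, dotProduct]
  calc ∑ i : Fin (k+3), ∑ j : Fin (k+3), A⁻¹ i j
      = ∑ i : Fin (k+3), xq m (i : ℕ) := Finset.sum_congr rfl (fun i _ => hstep i)
    _ = ∑ j ∈ Finset.range (k+3), xq m j :=
        Fin.sum_univ_eq_sum_range (fun j => xq m j) (k+3)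
    _ = 2 - (Nat.fib (k+2) : ℚ) := sumx k
    _ = 2 - (Nat.fib (k + 3 - 1) : ℚ) := by norm_num
end

section
/- For every n ≥ 3 and every integer S with 2 − F_{n-1} ≤ S ≤ 2 + F_{n-1}, there exists an n×n invertible upper triangular (0,1)-matrix A such that the sum of the entries of A⁻¹ equals S. -/
/-- A "nice" sequence of length `m`: every `1 - c j` is a subset sum of earlier
entries, the total sum is `N + P`, and every integer in `[N, P]` is a subset sum. -/
def NiceSeq (c : ℕ → ℤ) (m : ℕ) (N P : ℤ) : Prop :=
  (∀ j < m, ∃ T : Finset ℕ, T ⊆ Finset.range j ∧ (∑ i ∈ T, c i) = 1 - c j) ∧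
  ((∑ j ∈ Finset.range m, c j) = N + P) ∧
  (∀ x : ℤ, N ≤ x → x ≤ P → ∃ W : Finset ℕ, W ⊆ Finset.range m ∧ (∑ i ∈ W, c i) = x)

lemma nice_append_pos {c : ℕ → ℤ} {m : ℕ} {N P : ℤ} (h : NiceSeq c m N P)
    (hN : N ≤ 0) (hP : 0 ≤ P) :
    NiceSeq (fun i => if i = m then 1 - N else c i) (m + 1) N (P + (1 - N)) := by
  obtain ⟨hgood, hsum, hcov⟩ := h
  have hagree : ∀ (T : Finset ℕ), T ⊆ Finset.range m →
      (∑ i ∈ T, (if i = m then 1 - N else c i)) = ∑ i ∈ T, c i := by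
    intro T hT
    refine Finset.sum_congr rfl ?_
    intro i hi
    have : i < m := Finset.mem_range.mp (hT hi)
    simp [Nat.ne_of_lt this]
  refine ⟨?_, ?_, ?_⟩
  · intro j hj
    rcases Nat.lt_or_ge j m with hjm | hjm
    · obtain ⟨T, hT, hTs⟩ := hgood j hjm
      refine ⟨T, hT, ?_⟩
      rw [hagree T (hT.trans (Finset.range_subset_range.mpr hjm.le))]
      simp [Nat.ne_of_lt hjm, hTs]
    · have hjm' : m = j := le_antisymm hjm (Nat.lt_succ_iff.mp hj)
      subst hjm'
      obtain ⟨W, hW, hWs⟩ := hcov N le_rfl (hN.trans hP)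
      refine ⟨W, hW, ?_⟩
      rw [hagree W hW, hWs]
      simp
  · rw [Finset.sum_range_succ, hagree _ le_rfl, hsum]
    simp
    ring
  · intro x hx1 hx2
    rcases le_or_gt x P with hxP | hxP
    · obtain ⟨W, hW, hWs⟩ := hcov x hx1 hxP
      refine ⟨W, hW.trans (Finset.range_subset_range.mpr (Nat.le_succ m)), ?_⟩
      rw [hagree W hW, hWs]
    · obtain ⟨W, hW, hWs⟩ := hcov (x - (1 - N)) (by linarith) (by linarith)
      have hmW : m ∉ W := fun hc => absurd (Finset.mem_range.mp (hW hc)) (lt_irrefl m)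
      refine ⟨insert m W, ?_, ?_⟩
      · intro i hi
        rcases Finset.mem_insert.mp hi with h | hi
        · exact Finset.mem_range.mpr (by omega)
        · exact (hW.trans (Finset.range_subset_range.mpr (Nat.le_succ m))) hi
      · rw [Finset.sum_insert hmW, hagree W hW, hWs]
        simp

lemma nice_append_neg {c : ℕ → ℤ} {m : ℕ} {N P : ℤ} (h : NiceSeq c m N P)
    (hN : N ≤ 0) (hP : 0 ≤ P) :
    NiceSeq (fun i => if i = m then 1 - P else c i) (m + 1) (N + (1 - P)) P := by
  obtain ⟨hgood, hsum, hcov⟩ := h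
  have hagree : ∀ (T : Finset ℕ), T ⊆ Finset.range m →
      (∑ i ∈ T, (if i = m then 1 - P else c i)) = ∑ i ∈ T, c i := by
    intro T hT
    refine Finset.sum_congr rfl ?_
    intro i hi
    have : i < m := Finset.mem_range.mp (hT hi)
    simp [Nat.ne_of_lt this]
  refine ⟨?_, ?_, ?_⟩
  · intro j hj
    rcases Nat.lt_or_ge j m with hjm | hjm
    · obtain ⟨T, hT, hTs⟩ := hgood j hjm
      refine ⟨T, hT, ?_⟩
      rw [hagree T (hT.trans (Finset.range_subset_range.mpr hjm.le))]
      simp [Nat.ne_of_lt hjm, hTs]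
    · have hjm' : m = j := le_antisymm hjm (Nat.lt_succ_iff.mp hj)
      subst hjm'
      obtain ⟨W, hW, hWs⟩ := hcov P (hN.trans hP) le_rfl
      refine ⟨W, hW, ?_⟩
      rw [hagree W hW, hWs]
      simp
  · rw [Finset.sum_range_succ, hagree _ le_rfl, hsum]
    simp
    ring
  · intro x hx1 hx2
    rcases le_or_gt N x with hxN | hxN
    · obtain ⟨W, hW, hWs⟩ := hcov x hxN hx2
      refine ⟨W, hW.trans (Finset.range_subset_range.mpr (Nat.le_succ m)), ?_⟩
      rw [hagree W hW, hWs]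
    · obtain ⟨W, hW, hWs⟩ := hcov (x - (1 - P)) (by linarith) (by linarith)
      have hmW : m ∉ W := fun hc => absurd (Finset.mem_range.mp (hW hc)) (lt_irrefl m)
      refine ⟨insert m W, ?_, ?_⟩
      · intro i hi
        rcases Finset.mem_insert.mp hi with h | hi
        · exact Finset.mem_range.mpr (by omega)
        · exact (hW.trans (Finset.range_subset_range.mpr (Nat.le_succ m))) hi
      · rw [Finset.sum_insert hmW, hagree W hW, hWs]
        simp

lemma nice_key (k : ℕ) :
    (∃ c, NiceSeq c (k + 2) (1 - (Nat.fib (k + 1) : ℤ)) ((Nat.fib (k + 2) : ℤ) + 1)) ∧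
    (∃ c, NiceSeq c (k + 2) (1 - (Nat.fib (k + 2) : ℤ)) ((Nat.fib (k + 1) : ℤ) + 1)) := by
  induction k with
  | zero =>
    have base : NiceSeq (fun _ => 1) 2 0 2 := by
      refine ⟨?_, ?_, ?_⟩
      · intro j hj
        exact ⟨∅, Finset.empty_subset _, by simp⟩
      · simp [Finset.sum_range_succ]
      · intro x hx1 hx2
        interval_cases x
        · exact ⟨∅, Finset.empty_subset _, by simp⟩
        · exact ⟨{0}, by simp [Finset.subset_iff], by simp⟩
        · exact ⟨{0, 1}, by simp [Finset.subset_iff], by simp⟩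
    constructor
    · exact ⟨fun _ => 1, by simpa using base⟩
    · exact ⟨fun _ => 1, by simpa using base⟩
  | succ k ih =>
    obtain ⟨⟨cp, hp⟩, ⟨cm, hm⟩⟩ := ih
    have hfib1 : (1 : ℤ) ≤ (Nat.fib (k + 1) : ℤ) := by
      exact_mod_cast Nat.fib_pos.mpr (Nat.succ_pos k)
    have hfib2 : (1 : ℤ) ≤ (Nat.fib (k + 2) : ℤ) := by
      exact_mod_cast Nat.fib_pos.mpr (Nat.succ_pos (k + 1))
    have hfib3 : (Nat.fib (k + 3) : ℤ) = (Nat.fib (k + 1) : ℤ) + (Nat.fib (k + 2) : ℤ) := by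
      have := Nat.fib_add_two (n := k + 1)
      exact_mod_cast congrArg (Nat.cast : ℕ → ℤ) this
    constructor
    · -- append positive to cm
      have h' := nice_append_pos hm (by linarith) (by linarith)
      have e1 : (Nat.fib (k + 1) : ℤ) + 1 + (1 - (1 - (Nat.fib (k + 2) : ℤ)))
          = (Nat.fib (k + 3) : ℤ) + 1 := by rw [hfib3]; ring
      rw [e1] at h'
      exact ⟨_, h'⟩
    · -- append negative to cp
      have h' := nice_append_neg hp (by linarith) (by linarith)
      have e1 : 1 - (Nat.fib (k + 1) : ℤ) + (1 - ((Nat.fib (k + 2) : ℤ) + 1))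
          = 1 - (Nat.fib (k + 3) : ℤ) := by rw [hfib3]; ring
      rw [e1] at h'
      exact ⟨_, h'⟩

lemma exists_u (n : ℕ) (hn : 3 ≤ n) (S : ℤ)
    (h1 : 2 - (Nat.fib (n - 1) : ℤ) ≤ S) (h2 : S ≤ 2 + (Nat.fib (n - 1) : ℤ)) :
    ∃ u : ℕ → ℤ, (∑ j ∈ Finset.range n, u j = S) ∧
      ∀ j < n, ∃ T : Finset ℕ, T ⊆ Finset.range j ∧ (∑ i ∈ T, u i) = 1 - u j := by
  obtain ⟨k, rfl⟩ : ∃ k, n = k + 3 := ⟨n - 3, by omega⟩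
  have hfibeq : (k + 3) - 1 = k + 2 := by omega
  rw [hfibeq] at h1 h2
  have hfib1 : (1 : ℤ) ≤ (Nat.fib (k + 1) : ℤ) := by
    exact_mod_cast Nat.fib_pos.mpr (Nat.succ_pos k)
  have hfib2 : (Nat.fib (k + 1) : ℤ) ≤ (Nat.fib (k + 2) : ℤ) := by
    exact_mod_cast Nat.fib_le_fib_succ
  obtain ⟨⟨cp, hp⟩, ⟨cm, hm⟩⟩ := nice_key k
  -- choose variant
  rcases le_or_gt 2 S with hS | hS
  · -- use cp : N = 1 - fib (k+1), P = fib (k+2) + 1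
    set N : ℤ := 1 - (Nat.fib (k + 1) : ℤ) with hNdef
    set P : ℤ := (Nat.fib (k + 2) : ℤ) + 1 with hPdef
    obtain ⟨hgood, hsum, hcov⟩ := hp
    obtain ⟨W, hW, hWs⟩ := hcov (N + P + 1 - S) (by simp only [hNdef, hPdef]; linarith)
      (by simp only [hNdef, hPdef]; linarith)
    refine ⟨fun i => if i = k + 2 then S - (N + P) else cp i, ?_, ?_⟩
    · rw [show k + 3 = (k + 2) + 1 from rfl, Finset.sum_range_succ]
      have : (∑ i ∈ Finset.range (k + 2), (if i = k + 2 then S - (N + P) else cp i))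
          = ∑ i ∈ Finset.range (k + 2), cp i := by
        refine Finset.sum_congr rfl fun i hi => ?_
        simp [Nat.ne_of_lt (Finset.mem_range.mp hi)]
      rw [this, hsum]; simp
    · intro j hj
      rcases Nat.lt_or_ge j (k + 2) with hjm | hjm
      · obtain ⟨T, hT, hTs⟩ := hgood j hjm
        refine ⟨T, hT, ?_⟩
        have : (∑ i ∈ T, (if i = k + 2 then S - (N + P) else cp i)) = ∑ i ∈ T, cp i := by
          refine Finset.sum_congr rfl fun i hi => ?_
          have : i < j := Finset.mem_range.mp (hT hi)
          simp [show i ≠ k + 2 by omega]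
        rw [this, hTs]
        simp [show j ≠ k + 2 by omega]
      · have hjm' : j = k + 2 := by omega
        subst hjm'
        refine ⟨W, hW, ?_⟩
        have : (∑ i ∈ W, (if i = k + 2 then S - (N + P) else cp i)) = ∑ i ∈ W, cp i := by
          refine Finset.sum_congr rfl fun i hi => ?_
          have : i < k + 2 := Finset.mem_range.mp (hW hi)
          simp [show i ≠ k + 2 by omega]
        rw [this, hWs]
        simp
        try ring
  · -- use cm : N = 1 - fib (k+2), P = fib (k+1) + 1
    set N : ℤ := 1 - (Nat.fib (k + 2) : ℤ) with hNdef
    set P : ℤ := (Nat.fib (k + 1) : ℤ) + 1 with hPdef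
    obtain ⟨hgood, hsum, hcov⟩ := hm
    obtain ⟨W, hW, hWs⟩ := hcov (N + P + 1 - S) (by simp only [hNdef, hPdef]; linarith)
      (by simp only [hNdef, hPdef]; linarith)
    refine ⟨fun i => if i = k + 2 then S - (N + P) else cm i, ?_, ?_⟩
    · rw [show k + 3 = (k + 2) + 1 from rfl, Finset.sum_range_succ]
      have : (∑ i ∈ Finset.range (k + 2), (if i = k + 2 then S - (N + P) else cm i))
          = ∑ i ∈ Finset.range (k + 2), cm i := by
        refine Finset.sum_congr rfl fun i hi => ?_
        simp [Nat.ne_of_lt (Finset.mem_range.mp hi)]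
      rw [this, hsum]; simp
    · intro j hj
      rcases Nat.lt_or_ge j (k + 2) with hjm | hjm
      · obtain ⟨T, hT, hTs⟩ := hgood j hjm
        refine ⟨T, hT, ?_⟩
        have : (∑ i ∈ T, (if i = k + 2 then S - (N + P) else cm i)) = ∑ i ∈ T, cm i := by
          refine Finset.sum_congr rfl fun i hi => ?_
          have : i < j := Finset.mem_range.mp (hT hi)
          simp [show i ≠ k + 2 by omega]
        rw [this, hTs]
        simp [show j ≠ k + 2 by omega]
      · have hjm' : j = k + 2 := by omega
        subst hjm'
        refine ⟨W, hW, ?_⟩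
        have : (∑ i ∈ W, (if i = k + 2 then S - (N + P) else cm i)) = ∑ i ∈ W, cm i := by
          refine Finset.sum_congr rfl fun i hi => ?_
          have : i < k + 2 := Finset.mem_range.mp (hW hi)
          simp [show i ≠ k + 2 by omega]
        rw [this, hWs]
        simp
        try ring

/-- For n ≥ 3 and any integer S with 2 − F_{n-1} ≤ S ≤ 2 + F_{n-1}, there is an
invertible upper triangular (0,1)-matrix A with S(A⁻¹) = S. -/
theorem stmt_5 (n : ℕ) (hn : 3 ≤ n) (S : ℤ)
    (h1 : 2 - (Nat.fib (n - 1) : ℤ) ≤ S) (h2 : S ≤ 2 + (Nat.fib (n - 1) : ℤ)) :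
    ∃ A : Matrix (Fin n) (Fin n) ℚ,
      (∀ i j : Fin n, (j : ℕ) < (i : ℕ) → A i j = 0) ∧
      (∀ i : Fin n, A i i = 1) ∧
      (∀ i j : Fin n, A i j = 0 ∨ A i j = 1) ∧
      ∑ i : Fin n, ∑ j : Fin n, A⁻¹ i j = (S : ℚ) := by
  obtain ⟨u, husum, hugood⟩ := exists_u n hn S h1 h2
  -- choose the subsets
  have hchoice : ∀ j : ℕ, ∃ T : Finset ℕ, T ⊆ Finset.range j ∧
      (j < n → (∑ i ∈ T, u i) = 1 - u j) := by
    intro j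
    by_cases hj : j < n
    · obtain ⟨T, hT1, hT2⟩ := hugood j hj
      exact ⟨T, hT1, fun _ => hT2⟩
    · exact ⟨∅, Finset.empty_subset _, fun h => absurd h hj⟩
  choose T hT1 hT2 using hchoice
  set A : Matrix (Fin n) (Fin n) ℚ :=
    fun i j => if (i : ℕ) ∈ insert (j : ℕ) (T (j : ℕ)) then 1 else 0 with hA
  have hlow : ∀ i j : Fin n, (j : ℕ) < (i : ℕ) → A i j = 0 := by
    intro i j hij
    have : (i : ℕ) ∉ insert (j : ℕ) (T (j : ℕ)) := by
      intro hmem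
      rcases Finset.mem_insert.mp hmem with h | h
      · omega
      · have := Finset.mem_range.mp (hT1 (j : ℕ) h); omega
    simp only [hA]
    rw [if_neg this]
  have hdiag : ∀ i : Fin n, A i i = 1 := by
    intro i; simp [hA]
  have h01 : ∀ i j : Fin n, A i j = 0 ∨ A i j = 1 := by
    intro i j
    by_cases h : (i : ℕ) ∈ insert (j : ℕ) (T (j : ℕ))
    · right; simp only [hA]; rw [if_pos h]
    · left; simp only [hA]; rw [if_neg h]
  have hbt : A.BlockTriangular id := by
    intro i j hij
    exact hlow i j hij
  have hdet : A.det = 1 := by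
    rw [Matrix.det_of_upperTriangular hbt]
    exact Finset.prod_eq_one fun i _ => hdiag i
  have hunit : IsUnit A.det := by rw [hdet]; exact isUnit_one
  have hmul : A * A⁻¹ = 1 := Matrix.mul_nonsing_inv A hunit
  set v : Fin n → ℚ := fun i => ((u (i : ℕ) : ℤ) : ℚ) with hv
  have hvA : Matrix.vecMul v A = fun _ => 1 := by
    funext j
    have hsub : insert (j : ℕ) (T (j : ℕ)) ⊆ Finset.range n := by
      intro i hi
      rcases Finset.mem_insert.mp hi with h | h
      · exact Finset.mem_range.mpr (h ▸ j.isLt)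
      · exact Finset.mem_range.mpr (lt_trans (Finset.mem_range.mp (hT1 _ h)) j.isLt)
    have step1 : Matrix.vecMul v A j
        = ∑ i : Fin n, (if (i : ℕ) ∈ insert (j : ℕ) (T (j : ℕ)) then ((u (i:ℕ) : ℤ) : ℚ) else 0) := by
      simp only [Matrix.vecMul, dotProduct, hA, hv]
      refine Finset.sum_congr rfl fun i _ => ?_
      by_cases h : (i : ℕ) ∈ insert (j : ℕ) (T (j : ℕ)) <;> simp [h]
    have step2 : (∑ i : Fin n, (if (i : ℕ) ∈ insert (j : ℕ) (T (j : ℕ)) then ((u (i:ℕ) : ℤ) : ℚ) else 0))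
        = ∑ i ∈ Finset.range n, (if i ∈ insert (j : ℕ) (T (j : ℕ)) then ((u i : ℤ) : ℚ) else 0) := by
      exact Fin.sum_univ_eq_sum_range (fun i => if i ∈ insert (j : ℕ) (T (j : ℕ)) then ((u i : ℤ) : ℚ) else 0) n
    have step3 : (∑ i ∈ Finset.range n, (if i ∈ insert (j : ℕ) (T (j : ℕ)) then ((u i : ℤ) : ℚ) else 0))
        = ∑ i ∈ insert (j : ℕ) (T (j : ℕ)), ((u i : ℤ) : ℚ) := by
      rw [Finset.sum_ite_mem, Finset.inter_eq_right.mpr hsub]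
    have hjT : (j : ℕ) ∉ T (j : ℕ) := by
      intro h
      have := Finset.mem_range.mp (hT1 _ h); omega
    have step4 : (∑ i ∈ insert (j : ℕ) (T (j : ℕ)), ((u i : ℤ) : ℚ)) = 1 := by
      rw [Finset.sum_insert hjT, ← Int.cast_sum, hT2 (j : ℕ) j.isLt]
      push_cast
      ring
    rw [step1, step2, step3, step4]
  refine ⟨A, hlow, hdiag, h01, ?_⟩
  have hones : Matrix.vecMul (fun _ => (1 : ℚ)) A⁻¹ = v := by
    have : Matrix.vecMul (Matrix.vecMul v A) A⁻¹ = Matrix.vecMul v (A * A⁻¹) :=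
      (Matrix.vecMul_vecMul v A A⁻¹)
    rw [hvA] at this
    rw [this, hmul, Matrix.vecMul_one]
  calc ∑ i : Fin n, ∑ j : Fin n, A⁻¹ i j
      = ∑ j : Fin n, ∑ i : Fin n, A⁻¹ i j := Finset.sum_comm
    _ = ∑ j : Fin n, Matrix.vecMul (fun _ => (1 : ℚ)) A⁻¹ j := by
        refine Finset.sum_congr rfl fun j _ => ?_
        simp [Matrix.vecMul, dotProduct]
    _ = ∑ j : Fin n, v j := by rw [hones]
    _ = (S : ℚ) := by
        rw [hv]
        rw [Fin.sum_univ_eq_sum_range (fun i => ((u i : ℤ) : ℚ)) n]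
        rw [← husum]
        push_cast
        rfl
end

section
/- A number S is equal to the sum of the entries of the inverse of some invertible upper triangular (0,1)-matrix (of some size n ≥ 1) if and only if S is an integer. -/
def auxA (k m : ℕ) : Matrix (Fin (2*k+m+1)) (Fin (2*k+m+1)) ℚ :=
  Matrix.of fun i j =>
    (if i = j then (1:ℚ) else 0) +
    (if (i:ℕ) < k ∧ k ≤ (j:ℕ) ∧ (j:ℕ) < 2*k then 1 else 0)

def auxB (k m : ℕ) : Matrix (Fin (2*k+m+1)) (Fin (2*k+m+1)) ℚ :=
  Matrix.of fun i j =>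
    (if i = j then (1:ℚ) else 0) +
    (if (i:ℕ) < k ∧ k ≤ (j:ℕ) ∧ (j:ℕ) < 2*k then -1 else 0)

lemma aux_mul (k m : ℕ) : auxA k m * auxB k m = 1 := by
  ext i j
  rw [Matrix.mul_apply]
  have key : ∀ l : Fin (2*k+m+1), auxA k m i l * auxB k m l j =
      (if l = i then ((if i = j then (1:ℚ) else 0) +
        (if (i:ℕ) < k ∧ k ≤ (j:ℕ) ∧ (j:ℕ) < 2*k then -1 else 0)) else 0) +
      (if (i:ℕ) < k ∧ k ≤ (l:ℕ) ∧ (l:ℕ) < 2*k then (if l = j then (1:ℚ) else 0) else 0) := by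
    intro l
    simp only [auxA, auxB, Matrix.of_apply]
    split_ifs <;> (try subst_vars) <;> first | ring1 | (exfalso; omega)
  rw [Finset.sum_congr rfl (fun l _ => key l), Finset.sum_add_distrib]
  have h2 : ∑ l : Fin (2*k+m+1),
      (if (i:ℕ) < k ∧ k ≤ (l:ℕ) ∧ (l:ℕ) < 2*k then (if l = j then (1:ℚ) else 0) else 0)
      = (if (i:ℕ) < k ∧ k ≤ (j:ℕ) ∧ (j:ℕ) < 2*k then (1:ℚ) else 0) := by
    have e : ∀ l : Fin (2*k+m+1),
        (if (i:ℕ) < k ∧ k ≤ (l:ℕ) ∧ (l:ℕ) < 2*k then (if l = j then (1:ℚ) else 0) else 0)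
        = (if l = j then (if (i:ℕ) < k ∧ k ≤ (j:ℕ) ∧ (j:ℕ) < 2*k then (1:ℚ) else 0) else 0) := by
      intro l
      split_ifs <;> (try subst_vars) <;> first | rfl | simp_all
    rw [Finset.sum_congr rfl (fun l _ => e l)]
    simp
  rw [h2]
  simp only [Finset.sum_ite_eq', Finset.mem_univ, if_pos, Matrix.one_apply]
  split_ifs <;> ring

lemma construct (k m : ℕ) :
    ∃ A : Matrix (Fin (2*k+m+1)) (Fin (2*k+m+1)) ℚ,
      (∀ i j : Fin (2*k+m+1), (j : ℕ) < (i : ℕ) → A i j = 0) ∧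
      (∀ i : Fin (2*k+m+1), A i i = 1) ∧
      (∀ i j : Fin (2*k+m+1), A i j = 0 ∨ A i j = 1) ∧
      ∑ i, ∑ j, A⁻¹ i j = (2*k+m+1 : ℚ) - k^2 := by
  have hinv : (auxA k m)⁻¹ = auxB k m := Matrix.inv_eq_right_inv (aux_mul k m)
  refine ⟨auxA k m, ?_, ?_, ?_, ?_⟩
  · intro i j hji
    simp only [auxA, Matrix.of_apply]
    have h1 : ¬ (i = j) := by intro h; subst h; omega
    rw [if_neg h1, if_neg (by omega)]
    ring
  · intro i
    have h : ¬ ((i:ℕ) < k ∧ k ≤ (i:ℕ) ∧ (i:ℕ) < 2*k) := by omega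
    simp [auxA, h]
  · intro i j
    simp only [auxA, Matrix.of_apply]
    by_cases h1 : i = j
    · subst h1
      rw [if_pos rfl, if_neg (by omega)]
      right; ring
    · rw [if_neg h1]
      by_cases h2 : (i:ℕ) < k ∧ k ≤ (j:ℕ) ∧ (j:ℕ) < 2*k
      · rw [if_pos h2]; right; ring
      · rw [if_neg h2]; left; ring
  · rw [hinv]
    simp only [auxB, Matrix.of_apply]
    have expand : ∀ i j : Fin (2*k+m+1),
        ((if i = j then (1:ℚ) else 0) + (if (i:ℕ) < k ∧ k ≤ (j:ℕ) ∧ (j:ℕ) < 2*k then -1 else 0))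
        = (if i = j then (1:ℚ) else 0) +
          (if (i:ℕ) < k then (1:ℚ) else 0) * (if k ≤ (j:ℕ) ∧ (j:ℕ) < 2*k then -1 else 0) := by
      intro i j
      by_cases h1 : (i:ℕ) < k <;> by_cases h2 : k ≤ (j:ℕ) ∧ (j:ℕ) < 2*k <;>
        simp [h1, h2]
    simp only [expand]
    rw [Finset.sum_congr rfl (fun i _ => Finset.sum_add_distrib), Finset.sum_add_distrib]
    have hd : ∑ i : Fin (2*k+m+1), ∑ j : Fin (2*k+m+1), (if i = j then (1:ℚ) else 0)
        = (2*k+m+1 : ℚ) := by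
      simp [Finset.sum_ite_eq]
    have hc1 : ∑ i : Fin (2*k+m+1), (if (i:ℕ) < k then (1:ℚ) else 0) = k := by
      rw [Fin.sum_univ_eq_sum_range (fun i => if i < k then (1:ℚ) else 0) (2*k+m+1)]
      rw [Finset.sum_ite, Finset.sum_const, Finset.sum_const]
      have : Finset.filter (fun i => i < k) (Finset.range (2*k+m+1)) = Finset.range k := by
        ext x; simp; omega
      simp [this]
    have hc2 : ∑ j : Fin (2*k+m+1), (if k ≤ (j:ℕ) ∧ (j:ℕ) < 2*k then (-1:ℚ) else 0) = -k := by
      rw [Fin.sum_univ_eq_sum_range (fun j => if k ≤ j ∧ j < 2*k then (-1:ℚ) else 0) (2*k+m+1)]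
      rw [Finset.sum_ite, Finset.sum_const, Finset.sum_const]
      have : Finset.filter (fun j => k ≤ j ∧ j < 2*k) (Finset.range (2*k+m+1))
          = Finset.Ico k (2*k) := by
        ext x; simp; omega
      have hcard : (Finset.Ico k (2*k)).card = k := by
        rw [Nat.card_Ico]; omega
      simp [this, hcard]
    have hprod : ∑ i : Fin (2*k+m+1), ∑ j : Fin (2*k+m+1),
        (if (i:ℕ) < k then (1:ℚ) else 0) * (if k ≤ (j:ℕ) ∧ (j:ℕ) < 2*k then (-1:ℚ) else 0)
        = -(k^2 : ℚ) := by
      rw [← Finset.sum_mul_sum, hc1, hc2]; ring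
    rw [hd, hprod]
    ring

/-- A number S is a sum of entries of the inverse of some invertible upper
triangular (0,1)-matrix (of some size n ≥ 1) iff S is an integer. -/
theorem stmt_6 (S : ℚ) :
    (∃ n : ℕ, 1 ≤ n ∧ ∃ A : Matrix (Fin n) (Fin n) ℚ,
      (∀ i j : Fin n, (j : ℕ) < (i : ℕ) → A i j = 0) ∧
      (∀ i : Fin n, A i i = 1) ∧
      (∀ i j : Fin n, A i j = 0 ∨ A i j = 1) ∧
      ∑ i : Fin n, ∑ j : Fin n, A⁻¹ i j = S) ↔ ∃ z : ℤ, S = (z : ℚ) := by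
  constructor
  · rintro ⟨n, hn, A, htri, hdiag, h01, hsum⟩
    -- A has integer entries
    set A' : Matrix (Fin n) (Fin n) ℤ := Matrix.of (fun i j => (A i j).num) with hA'
    have hcast : A = A'.map (Int.cast : ℤ → ℚ) := by
      ext i j
      rcases h01 i j with h | h <;> simp [hA', Matrix.map_apply, h]
    have hbt : A.BlockTriangular id := by
      intro i j hij
      exact htri i j hij
    have hdet : A.det = 1 := by
      rw [Matrix.det_of_upperTriangular hbt]
      simp [hdiag]
    have hinv : A⁻¹ = A.adjugate := by
      rw [Matrix.inv_def, hdet]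
      simp
    have hadj : A.adjugate = (A'.adjugate).map (Int.cast : ℤ → ℚ) := by
      rw [hcast]
      have := RingHom.map_adjugate (Int.castRingHom ℚ) A'
      simpa [RingHom.mapMatrix_apply] using this.symm
    refine ⟨∑ i, ∑ j, A'.adjugate i j, ?_⟩
    rw [← hsum, hinv, hadj]
    push_cast [Matrix.map_apply]
    rfl
  · rintro ⟨z, rfl⟩
    set k : ℕ := z.natAbs + 3 with hk
    have hnn : 0 ≤ (k:ℤ)^2 - 2*k - 1 + z := by
      have h1 : (k:ℤ) = (z.natAbs:ℤ) + 3 := by push_cast [hk]; ring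
      have h2 : -z ≤ (z.natAbs:ℤ) := by omega
      nlinarith
    set m : ℕ := ((k:ℤ)^2 - 2*k - 1 + z).toNat with hm
    obtain ⟨A, h1, h2, h3, h4⟩ := construct k m
    refine ⟨2*k+m+1, by omega, A, h1, h2, h3, ?_⟩
    rw [h4]
    have hmz : (m : ℤ) = (k:ℤ)^2 - 2*k - 1 + z := by
      rw [hm]; exact Int.toNat_of_nonneg hnn
    have : (m : ℚ) = (k:ℚ)^2 - 2*(k:ℚ) - 1 + (z:ℚ) := by
      exact_mod_cast congrArg (Int.cast : ℤ → ℚ) hmz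
    rw [this]
    ring
end

section
/- For every n ≥ 4 and every n×n matrix A that is upper triangular with unit diagonal and with entries in {0,1}, the n-th entry of the row vector eᵀA⁻¹ has absolute value at most F_{n-1}, where e is the all-ones vector. -/
/-- Sum of positive parts of the first `m` entries. -/
def Paux (n : ℕ) (x : Fin n → ℚ) (m : ℕ) : ℚ :=
  ∑ k ∈ Finset.univ.filter (fun k : Fin n => (k : ℕ) < m), max (x k) 0

/-- Sum of negative parts of the first `m` entries. -/
def Naux (n : ℕ) (x : Fin n → ℚ) (m : ℕ) : ℚ :=
  ∑ k ∈ Finset.univ.filter (fun k : Fin n => (k : ℕ) < m), min (x k) 0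

lemma aux_bound (n : ℕ) (x : Fin n → ℚ) (c : Fin n → Fin n → ℚ)
    (hc : ∀ k j : Fin n, c k j = 0 ∨ c k j = 1)
    (hx : ∀ j : Fin n, x j =
      1 - ∑ k ∈ Finset.univ.filter (fun k : Fin n => (k : ℕ) < (j : ℕ)), c k j * x k) :
    ∀ m : ℕ, 1 ≤ m → (hm : m < n) → |x ⟨m, hm⟩| ≤ (Nat.fib m : ℚ) := by
  -- the partial sum appearing in the recurrence is between Naux and Paux
  have hsle : ∀ j : Fin n,
      (∑ k ∈ Finset.univ.filter (fun k : Fin n => (k : ℕ) < (j : ℕ)), c k j * x k)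
        ≤ Paux n x (j : ℕ) := by
    intro j
    apply Finset.sum_le_sum
    intro k _
    rcases hc k j with h | h
    · rw [h, zero_mul]; exact le_max_right _ _
    · rw [h, one_mul]; exact le_max_left _ _
  have hsge : ∀ j : Fin n,
      Naux n x (j : ℕ) ≤
        ∑ k ∈ Finset.univ.filter (fun k : Fin n => (k : ℕ) < (j : ℕ)), c k j * x k := by
    intro j
    apply Finset.sum_le_sum
    intro k _
    rcases hc k j with h | h
    · rw [h, zero_mul]; exact min_le_right _ _
    · rw [h, one_mul]; exact min_le_left _ _
  -- main invariant
  have key : ∀ m : ℕ, 1 ≤ m → m ≤ n →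
      Paux n x m ≤ (Nat.fib m : ℚ) + 1 ∧ 1 - (Nat.fib m : ℚ) ≤ Naux n x m ∧
        Paux n x m - Naux n x m ≤ (Nat.fib (m + 1) : ℚ) := by
    intro m hm
    induction m, hm using Nat.le_induction with
    | base =>
      intro h1n
      have h0n : 0 < n := by omega
      have hfilt0 : Finset.univ.filter (fun k : Fin n => (k : ℕ) < 0) = ∅ := by
        ext k; simp
      have hx0 : x ⟨0, h0n⟩ = 1 := by
        have h := hx ⟨0, h0n⟩
        simpa [hfilt0] using h
      have hfilt1 : Finset.univ.filter (fun k : Fin n => (k : ℕ) < 1)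
          = {(⟨0, h0n⟩ : Fin n)} := by
        ext k
        simp [Fin.ext_iff]
      have hPa : Paux n x 1 = 1 := by
        rw [Paux, hfilt1, Finset.sum_singleton, hx0]; norm_num
      have hNa : Naux n x 1 = 0 := by
        rw [Naux, hfilt1, Finset.sum_singleton, hx0]; norm_num
      rw [hPa, hNa]
      norm_num [Nat.fib_one, Nat.fib_two]
    | succ m hm ih =>
      intro hmn
      obtain ⟨hP1, hN1, hD1⟩ := ih (by omega)
      have hmn' : m < n := by omega
      have hins : Finset.univ.filter (fun k : Fin n => (k : ℕ) < m + 1)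
          = insert (⟨m, hmn'⟩ : Fin n) (Finset.univ.filter (fun k : Fin n => (k : ℕ) < m)) := by
        ext k
        simp [Fin.ext_iff]
        omega
      have hnotmem : (⟨m, hmn'⟩ : Fin n) ∉
          Finset.univ.filter (fun k : Fin n => (k : ℕ) < m) := by simp
      have hPsucc : Paux n x (m + 1) = max (x ⟨m, hmn'⟩) 0 + Paux n x m := by
        rw [Paux, hins, Finset.sum_insert hnotmem]; rfl
      have hNsucc : Naux n x (m + 1) = min (x ⟨m, hmn'⟩) 0 + Naux n x m := by
        rw [Naux, hins, Finset.sum_insert hnotmem]; rfl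
      have hxm := hx ⟨m, hmn'⟩
      have hs1 := hsle ⟨m, hmn'⟩
      have hs2 := hsge ⟨m, hmn'⟩
      have hfib1 : (1 : ℚ) ≤ (Nat.fib m : ℚ) := by
        exact_mod_cast Nat.succ_le_of_lt (Nat.fib_pos.mpr (by omega))
      have hmono : (Nat.fib m : ℚ) ≤ (Nat.fib (m + 1) : ℚ) := by
        exact_mod_cast Nat.fib_le_fib_succ
      have hadd : (Nat.fib (m + 2) : ℚ) = (Nat.fib m : ℚ) + (Nat.fib (m + 1) : ℚ) := by
        exact_mod_cast Nat.fib_add_two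
      rcases le_or_gt 0 (x ⟨m, hmn'⟩) with hpos | hneg
      · rw [hPsucc, hNsucc, max_eq_left hpos, min_eq_right hpos]
        refine ⟨by linarith, by linarith, by linarith⟩
      · rw [hPsucc, hNsucc, max_eq_right hneg.le, min_eq_left hneg.le]
        refine ⟨by linarith, by linarith, by linarith⟩
  -- conclude
  intro m hm1 hmn
  obtain ⟨hP1, hN1, _⟩ := key m hm1 (by omega)
  have hxm := hx ⟨m, hmn⟩
  have hs1 := hsle ⟨m, hmn⟩
  have hs2 := hsge ⟨m, hmn⟩
  rw [abs_le]
  constructor <;> simp only at hxm <;> [linarith; linarith]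

/-- For n ≥ 4 and A upper triangular with unit diagonal and (0,1) entries, the
n-th entry of eᵀA⁻¹ (i.e. the sum of the last column of A⁻¹) has absolute value
at most F_{n-1}. -/
theorem stmt_7 (n : ℕ) (hn : 4 ≤ n) (A : Matrix (Fin n) (Fin n) ℚ)
    (hut : ∀ i j : Fin n, (j : ℕ) < (i : ℕ) → A i j = 0)
    (hdiag : ∀ i : Fin n, A i i = 1)
    (h01 : ∀ i j : Fin n, A i j = 0 ∨ A i j = 1) :
    |∑ i : Fin n, A⁻¹ i ⟨n - 1, by omega⟩| ≤ (Nat.fib (n - 1) : ℚ) := by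
  have hbt : A.BlockTriangular id := fun i j h => hut i j h
  have hdet : A.det = 1 := by
    rw [Matrix.det_of_upperTriangular hbt]
    simp [hdiag]
  have hu : IsUnit A.det := by rw [hdet]; exact isUnit_one
  have hinv : A⁻¹ * A = 1 := Matrix.nonsing_inv_mul A hu
  set x : Fin n → ℚ := fun j => ∑ i, A⁻¹ i j with hxdef
  have hrec : ∀ j : Fin n, ∑ k, x k * A k j = 1 := by
    intro j
    have h1 : ∑ k, x k * A k j = ∑ i, (A⁻¹ * A) i j := by
      simp only [hxdef, Matrix.mul_apply, Finset.sum_mul]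
      exact Finset.sum_comm
    rw [h1, hinv]
    simp [Matrix.one_apply]
  have hstep : ∀ j : Fin n, x j =
      1 - ∑ k ∈ Finset.univ.filter (fun k : Fin n => (k : ℕ) < (j : ℕ)), A k j * x k := by
    intro j
    have h := hrec j
    rw [← Finset.sum_filter_add_sum_filter_not Finset.univ
      (fun k : Fin n => (k : ℕ) < (j : ℕ))] at h
    have h2 : ∑ k ∈ Finset.univ.filter (fun k : Fin n => ¬ (k : ℕ) < (j : ℕ)),
        x k * A k j = x j := by
      rw [Finset.sum_eq_single j]
      · rw [hdiag j, mul_one]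
      · intro k hk hne
        simp only [Finset.mem_filter, Finset.mem_univ, true_and, not_lt] at hk
        have hkj : (j : ℕ) < (k : ℕ) := by
          rcases lt_or_eq_of_le hk with h' | h'
          · exact h'
          · exact absurd (Fin.ext h'.symm) hne
        rw [hut k j hkj, mul_zero]
      · intro hj
        exact absurd (by simp : j ∈ Finset.univ.filter
          (fun k : Fin n => ¬ (k : ℕ) < (j : ℕ))) hj
    have h3 : ∑ k ∈ Finset.univ.filter (fun k : Fin n => (k : ℕ) < (j : ℕ)),
        x k * A k j = ∑ k ∈ Finset.univ.filter (fun k : Fin n => (k : ℕ) < (j : ℕ)),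
        A k j * x k := by
      apply Finset.sum_congr rfl
      intro k _
      ring
    rw [h2, h3] at h
    linarith
  have hlast : x ⟨n - 1, by omega⟩ = ∑ i : Fin n, A⁻¹ i ⟨n - 1, by omega⟩ := rfl
  rw [← hlast]
  exact aux_bound n x (fun k j => A k j) (fun k j => h01 k j) hstep (n - 1) (by omega) (by omega)
end

section
/- Let G_n be the set of n×n real matrices of the form I + B where B is strictly upper triangular with entries in [0,1]. Then for n ≥ 3, the maximum of the sum of entries of A⁻¹ over A ∈ G_n is 2 + F_{n-1}, and the minimum is 2 − F_{n-1}. -/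
open Finset

/-- the pattern sequence: t ones followed by signed Fibonacci numbers -/
noncomputable def fam (t q : ℕ) : ℝ :=
  if q < t then 1 else if Even (q + t) then (Nat.fib q : ℝ) else -(Nat.fib q)

lemma fam_of_even {t q : ℕ} (htq : t ≤ q) (h : Even (q + t)) :
    fam t q = (Nat.fib q : ℝ) := by
  simp [fam, Nat.not_lt.mpr htq, h]

lemma fam_of_odd {t q : ℕ} (htq : t ≤ q) (h : ¬ Even (q + t)) :
    fam t q = -(Nat.fib q : ℝ) := by
  simp [fam, Nat.not_lt.mpr htq, h]

lemma fib_cast_pos {q : ℕ} (hq : 1 ≤ q) : (0:ℝ) < (Nat.fib q : ℝ) := by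
  exact_mod_cast Nat.fib_pos.mpr hq

lemma fam_lt {t q : ℕ} (ht : 1 ≤ t) : fam t q < 0 ↔ (t ≤ q ∧ ¬ Even (q + t)) := by
  unfold fam
  split_ifs with h1 h2
  · constructor
    · intro h; linarith
    · rintro ⟨h3, _⟩; omega
  · have : (0:ℝ) ≤ (Nat.fib q : ℝ) := by positivity
    constructor
    · intro h; linarith
    · rintro ⟨_, h⟩; exact absurd h2 h
  · have := fib_cast_pos (q := q) (by omega)
    constructor
    · intro _; exact ⟨by omega, h2⟩
    · intro _; linarith

lemma fam_pos {t q : ℕ} (ht : 1 ≤ t) : 0 < fam t q ↔ ¬(t ≤ q ∧ ¬ Even (q + t)) := by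
  unfold fam
  split_ifs with h1 h2
  · constructor
    · rintro _ ⟨h3, _⟩; omega
    · intro _; norm_num
  · have := fib_cast_pos (q := q) (by omega)
    constructor
    · rintro _ ⟨_, hc⟩; exact hc h2
    · intro _; linarith
  · have := fib_cast_pos (q := q) (by omega)
    constructor
    · intro hc; linarith
    · intro hc; exact absurd ⟨by omega, h2⟩ hc

lemma fam_ne {t q : ℕ} (ht : 1 ≤ t) : fam t q ≠ 0 := by
  rcases Classical.em (t ≤ q ∧ ¬ Even (q + t)) with h | h
  · have := (fam_lt ht).mpr h; linarith
  · have := (fam_pos ht).mpr h; linarith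

lemma fib_cast_add {k : ℕ} : (Nat.fib k : ℝ) + (Nat.fib (k+1) : ℝ) = (Nat.fib (k+2) : ℝ) := by
  rw [← Nat.cast_add, ← Nat.fib_add_two]

lemma famGH {t : ℕ} (ht : t = 1 ∨ t = 2) : ∀ p, t ≤ p →
    (¬ Even (p + t) → (∑ q ∈ range p, max (fam t q) 0 = (Nat.fib p : ℝ) + 1 ∧
                       ∑ q ∈ range p, max (-(fam t q)) 0 = (Nat.fib (p-1) : ℝ) - 1)) ∧
    (Even (p + t) → (∑ q ∈ range p, max (fam t q) 0 = (Nat.fib (p-1) : ℝ) + 1 ∧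
                     ∑ q ∈ range p, max (-(fam t q)) 0 = (Nat.fib p : ℝ) - 1)) := by
  intro p hpt
  induction p, hpt using Nat.le_induction with
  | base =>
      constructor
      · intro h; exact absurd (by simp [Nat.even_add]) h
      · intro _
        rcases ht with rfl | rfl
        · norm_num [fam]
        · norm_num [Finset.sum_range_succ, fam]
  | succ p hp IH =>
      have ht1 : 1 ≤ t := by omega
      obtain ⟨k, rfl⟩ : ∃ k, p = k + 1 := ⟨p - 1, by omega⟩
      have hflip : (k + 1 + 1 + t) = (k + 1 + t) + 1 := by ring
      rcases Classical.em (Even (k + 1 + t)) with he | he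
      · have hf := fam_of_even (t := t) (q := k+1) (by omega) he
        have hfib := fib_cast_pos (q := k+1) (by omega)
        have hGH := IH.2 he
        have hnew : ¬ Even (k + 1 + 1 + t) := by
          rw [hflip, Nat.even_add_one]; simpa using he
        refine ⟨fun _ => ⟨?_, ?_⟩, fun hc => absurd hc hnew⟩
        · rw [Finset.sum_range_succ, hGH.1, hf]
          rw [max_eq_left (by linarith)]
          simp only [Nat.add_sub_cancel]
          have := fib_cast_add (k := k)
          linarith
        · rw [Finset.sum_range_succ, hGH.2, hf]
          rw [max_eq_right (by linarith)]
          simp only [Nat.add_sub_cancel]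
          linarith
      · have hf := fam_of_odd (t := t) (q := k+1) (by omega) he
        have hfib := fib_cast_pos (q := k+1) (by omega)
        have hGH := IH.1 he
        have hnew : Even (k + 1 + 1 + t) := by
          rw [hflip, Nat.even_add_one]; simpa using he
        refine ⟨fun hc => absurd hnew hc, fun _ => ⟨?_, ?_⟩⟩
        · rw [Finset.sum_range_succ, hGH.1, hf]
          rw [max_eq_right (by linarith)]
          simp only [Nat.add_sub_cancel]
          linarith
        · rw [Finset.sum_range_succ, hGH.2, hf]
          rw [max_eq_left (by linarith)]
          simp only [Nat.add_sub_cancel]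
          have := fib_cast_add (k := k)
          linarith

lemma sel_pos {a b : ℝ} (hb : 0 < b) : (if a * b < 0 then a else 0) = -max (-a) 0 := by
  rcases le_or_gt 0 a with h | h
  · rw [if_neg (by nlinarith), max_eq_right (by linarith)]; ring
  · rw [if_pos (by nlinarith), max_eq_left (by linarith)]; ring

lemma sel_neg {a b : ℝ} (hb : b < 0) : (if a * b < 0 then a else 0) = max a 0 := by
  rcases le_or_gt a 0 with h | h
  · rw [if_neg (by nlinarith), max_eq_right h]
  · rw [if_pos (by nlinarith), max_eq_left (by linarith)]

lemma yrel {t r : ℕ} (ht : t = 1 ∨ t = 2) (htr : t ≤ r) (p : ℕ) :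
    fam t (min p r) +
      ∑ q ∈ range p, (if fam t (min q r) * fam t (min p r) < 0 then fam t (min q r) else 0)
      = 1 := by
  have ht1 : 1 ≤ t := by omega
  rcases lt_or_ge p t with hpt | hpt
  · -- small p : y p = 1, all previous are 1
    have hyp : fam t (min p r) = 1 := by
      rw [min_eq_left (by omega)]; simp [fam, hpt]
    rw [hyp]
    rw [Finset.sum_eq_zero, add_zero]
    intro q hq
    simp only [mem_range] at hq
    have : fam t (min q r) = 1 := by
      rw [min_eq_left (by omega)]; simp [fam]; omega
    rw [this]; norm_num
  · rcases le_or_gt p r with hpr | hpr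
    · -- main range
      have hmin : min p r = p := min_eq_left hpr
      have hcong : ∀ q ∈ range p, min q r = q := by
        intro q hq; simp only [mem_range] at hq; exact min_eq_left (by omega)
      rcases Classical.em (Even (p + t)) with he | he
      · have hyp : fam t (min p r) = (Nat.fib p : ℝ) := by rw [hmin]; exact fam_of_even hpt he
        have hypos : (0:ℝ) < fam t (min p r) := by
          rw [hyp]; exact fib_cast_pos (by omega)
        calc fam t (min p r) + ∑ q ∈ range p, (if fam t (min q r) * fam t (min p r) < 0 then fam t (min q r) else 0)
            = fam t (min p r) + ∑ q ∈ range p, (-max (-(fam t q)) 0) := by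
              congr 1
              refine Finset.sum_congr rfl fun q hq => ?_
              rw [hcong q hq, sel_pos hypos]
          _ = fam t (min p r) - ∑ q ∈ range p, max (-(fam t q)) 0 := by
              rw [Finset.sum_neg_distrib]; ring
          _ = 1 := by
              rw [hyp, ((famGH ht p hpt).2 he).2]; ring
      · have hyp : fam t (min p r) = -(Nat.fib p : ℝ) := by rw [hmin]; exact fam_of_odd hpt he
        have hyneg : fam t (min p r) < 0 := by
          rw [hyp]; have := fib_cast_pos (q := p) (by omega); linarith
        calc fam t (min p r) + ∑ q ∈ range p, (if fam t (min q r) * fam t (min p r) < 0 then fam t (min q r) else 0)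
            = fam t (min p r) + ∑ q ∈ range p, max (fam t q) 0 := by
              congr 1
              refine Finset.sum_congr rfl fun q hq => ?_
              rw [hcong q hq, sel_neg hyneg]
          _ = 1 := by
              rw [hyp, ((famGH ht p hpt).1 he).1]; ring
    · -- tail range
      have hmin : min p r = r := min_eq_right (by omega)
      have hr1 : t ≤ r + 1 := by omega
      rcases Classical.em (Even (r + t)) with he | he
      · have hyp : fam t (min p r) = (Nat.fib r : ℝ) := by rw [hmin]; exact fam_of_even htr he
        have hypos : (0:ℝ) < fam t (min p r) := by
          rw [hyp]; exact fib_cast_pos (by omega)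
        have hne : ¬ Even (r + 1 + t) := by
          rw [show r + 1 + t = (r + t) + 1 by ring, Nat.even_add_one]; simpa using he
        have hsplit : ∑ q ∈ range p, (if fam t (min q r) * fam t (min p r) < 0 then fam t (min q r) else 0)
            = ∑ q ∈ range (r+1), (-max (-(fam t q)) 0) := by
          rw [range_eq_Ico,
            ← Finset.sum_Ico_consecutive _ (Nat.zero_le (r+1)) (by omega : r + 1 ≤ p)]
          have h2 : ∑ q ∈ Finset.Ico (r+1) p, (if fam t (min q r) * fam t (min p r) < 0 then fam t (min q r) else 0) = 0 := by
            refine Finset.sum_eq_zero fun q hq => ?_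
            simp only [Finset.mem_Ico] at hq
            rw [min_eq_right (by omega : r ≤ q), hmin, if_neg (not_lt.mpr (mul_self_nonneg _))]
          rw [h2, add_zero]
          refine Finset.sum_congr (range_eq_Ico (r+1)).symm fun q hq => ?_
          simp only [Finset.mem_Ico, mem_range] at hq
          rw [min_eq_left (by omega), sel_pos hypos]
        rw [hsplit, Finset.sum_neg_distrib, hyp, ← sub_eq_add_neg,
          ((famGH ht (r+1) hr1).1 hne).2]
        simp only [Nat.add_sub_cancel]; ring
      · have hyp : fam t (min p r) = -(Nat.fib r : ℝ) := by rw [hmin]; exact fam_of_odd htr he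
        have hyneg : fam t (min p r) < 0 := by
          rw [hyp]; have := fib_cast_pos (q := r) (by omega); linarith
        have hne : Even (r + 1 + t) := by
          rw [show r + 1 + t = (r + t) + 1 by ring, Nat.even_add_one]; simpa using he
        have hsplit : ∑ q ∈ range p, (if fam t (min q r) * fam t (min p r) < 0 then fam t (min q r) else 0)
            = ∑ q ∈ range (r+1), max (fam t q) 0 := by
          rw [range_eq_Ico,
            ← Finset.sum_Ico_consecutive _ (Nat.zero_le (r+1)) (by omega : r + 1 ≤ p)]
          have h2 : ∑ q ∈ Finset.Ico (r+1) p, (if fam t (min q r) * fam t (min p r) < 0 then fam t (min q r) else 0) = 0 := by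
            refine Finset.sum_eq_zero fun q hq => ?_
            simp only [Finset.mem_Ico] at hq
            rw [min_eq_right (by omega : r ≤ q), hmin, if_neg (not_lt.mpr (mul_self_nonneg _))]
          rw [h2, add_zero]
          refine Finset.sum_congr (range_eq_Ico (r+1)).symm fun q hq => ?_
          simp only [Finset.mem_Ico, mem_range] at hq
          rw [min_eq_left (by omega), sel_neg hyneg]
        rw [hsplit, hyp, ((famGH ht (r+1) hr1).2 hne).1]
        simp only [Nat.add_sub_cancel]; ring

lemma ysum {t r n : ℕ} (ht : t = 1 ∨ t = 2) (htr : t ≤ r) (hrn : r ≤ n - 1) (hn : 1 ≤ n) :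
    ∑ q ∈ range n, fam t (min q r) =
      if Even (r + t) then 2 + ((Nat.fib (r-1) : ℝ) + ((n-1-r : ℕ) : ℝ) * (Nat.fib r))
      else 2 - ((Nat.fib (r-1) : ℝ) + ((n-1-r : ℕ) : ℝ) * (Nat.fib r)) := by
  have ht1 : 1 ≤ t := by omega
  have hr1n : r + 1 ≤ n := by omega
  have hsplit : ∑ q ∈ range n, fam t (min q r)
      = ∑ q ∈ range (r+1), fam t q + ((n - 1 - r : ℕ) : ℝ) * fam t r := by
    rw [range_eq_Ico, ← Finset.sum_Ico_consecutive _ (Nat.zero_le (r+1)) hr1n]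
    congr 1
    · rw [← range_eq_Ico]
      exact Finset.sum_congr rfl fun q hq => by
        rw [min_eq_left (by simp only [mem_range] at hq; omega)]
    · rw [Finset.sum_congr rfl (fun q hq => by
        simp only [Finset.mem_Ico] at hq
        rw [min_eq_right (by omega : r ≤ q)]), Finset.sum_const, Nat.card_Ico]
      have : n - (r + 1) = n - 1 - r := by omega
      rw [this, nsmul_eq_mul]
  have hGsum : ∑ q ∈ range (r+1), fam t q
      = ∑ q ∈ range (r+1), max (fam t q) 0 - ∑ q ∈ range (r+1), max (-(fam t q)) 0 := by
    rw [← Finset.sum_sub_distrib]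
    exact Finset.sum_congr rfl fun q _ => (max_zero_sub_eq_self (fam t q)).symm
  obtain ⟨k, rfl⟩ : ∃ k, r = k + 1 := ⟨r - 1, by omega⟩
  have hfib := fib_cast_add (k := k)
  rcases Classical.em (Even (k + 1 + t)) with he | he
  · have hne : ¬ Even (k + 1 + 1 + t) := by
      rw [show k + 1 + 1 + t = (k + 1 + t) + 1 by ring, Nat.even_add_one]; simpa using he
    have hG := (famGH ht (k+1+1) (by omega)).1 hne
    rw [if_pos he, hsplit, hGsum, hG.1, hG.2, fam_of_even htr he]
    simp only [Nat.add_sub_cancel]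
    push_cast
    ring_nf
    ring_nf at hfib
    linarith [hfib]
  · have hne : Even (k + 1 + 1 + t) := by
      rw [show k + 1 + 1 + t = (k + 1 + t) + 1 by ring, Nat.even_add_one]; simpa using he
    have hG := (famGH ht (k+1+1) (by omega)).2 hne
    rw [if_neg he, hsplit, hGsum, hG.1, hG.2, fam_of_odd htr he]
    simp only [Nat.add_sub_cancel]
    push_cast
    ring_nf
    ring_nf at hfib
    linarith [hfib]


lemma det_one_add {n : ℕ} (B : Matrix (Fin n) (Fin n) ℝ)
    (hB0 : ∀ i j : Fin n, (j : ℕ) ≤ (i : ℕ) → B i j = 0) : (1 + B).det = 1 := by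
  have htri : (1 + B).BlockTriangular id := by
    intro i j hij
    simp only [id] at hij
    rw [Matrix.add_apply, Matrix.one_apply_ne (by exact fun h => absurd h (by
      intro h; subst h; exact lt_irrefl _ hij)), hB0 i j (by exact_mod_cast le_of_lt hij)]
    ring
  rw [Matrix.det_of_upperTriangular htri]
  apply Finset.prod_eq_one
  intro i _
  rw [Matrix.add_apply, Matrix.one_apply_eq, hB0 i i (le_refl _)]
  ring

lemma sum_inv_eq {n : ℕ} (B : Matrix (Fin n) (Fin n) ℝ)
    (hB0 : ∀ i j : Fin n, (j : ℕ) ≤ (i : ℕ) → B i j = 0)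
    (x : Fin n → ℝ) (hx : ∀ i, x i + ∑ j, B i j * x j = 1) :
    ∑ i : Fin n, ∑ j : Fin n, (1 + B)⁻¹ i j = ∑ i, x i := by
  have hdet : IsUnit (1 + B).det := by rw [det_one_add B hB0]; exact isUnit_one
  have hmul : (1 + B).mulVec x = fun _ => (1:ℝ) := by
    funext i
    simp only [Matrix.mulVec, dotProduct, Matrix.add_apply, add_mul,
      Finset.sum_add_distrib, Matrix.one_apply]
    rw [show ∑ j, (if i = j then (1:ℝ) else 0) * x j = x i by
      simp [ite_mul, Finset.sum_ite_eq]]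
    exact hx i
  have hxinv : x = (1 + B)⁻¹.mulVec (fun _ => (1:ℝ)) := by
    rw [← hmul, Matrix.mulVec_mulVec, Matrix.nonsing_inv_mul _ hdet, Matrix.one_mulVec]
  rw [hxinv]
  refine Finset.sum_congr rfl fun i _ => ?_
  simp [Matrix.mulVec, dotProduct]


variable {n : ℕ}

noncomputable def PP (x : Fin n → ℝ) (k : ℕ) : ℝ :=
  ∑ i ∈ univ.filter (fun i : Fin n => k ≤ (i : ℕ)), max (x i) 0

noncomputable def QQ (x : Fin n → ℝ) (k : ℕ) : ℝ :=
  ∑ i ∈ univ.filter (fun i : Fin n => k ≤ (i : ℕ)), max (-(x i)) 0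

lemma filter_ge_insert {k : ℕ} (hk : k < n) :
    univ.filter (fun i : Fin n => k ≤ (i : ℕ))
      = insert (⟨k, hk⟩ : Fin n) (univ.filter (fun i : Fin n => k + 1 ≤ (i : ℕ))) := by
  ext i
  simp only [mem_filter, mem_univ, true_and, mem_insert, Fin.ext_iff]
  omega

lemma not_mem_filter_succ {k : ℕ} (hk : k < n) :
    (⟨k, hk⟩ : Fin n) ∉ univ.filter (fun i : Fin n => k + 1 ≤ (i : ℕ)) := by
  simp

lemma PP_succ (x : Fin n → ℝ) {k : ℕ} (hk : k < n) :
    PP x k = max (x ⟨k, hk⟩) 0 + PP x (k + 1) := by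
  rw [PP, filter_ge_insert hk, Finset.sum_insert (not_mem_filter_succ hk)]; rfl

lemma QQ_succ (x : Fin n → ℝ) {k : ℕ} (hk : k < n) :
    QQ x k = max (-(x ⟨k, hk⟩)) 0 + QQ x (k + 1) := by
  rw [QQ, filter_ge_insert hk, Finset.sum_insert (not_mem_filter_succ hk)]; rfl

lemma PP_empty (x : Fin n → ℝ) : PP x n = 0 := by
  rw [PP]
  apply Finset.sum_eq_zero
  intro i hi
  simp only [mem_filter] at hi
  exact absurd hi.2 (by omega)

lemma QQ_empty (x : Fin n → ℝ) : QQ x n = 0 := by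
  rw [QQ]
  apply Finset.sum_eq_zero
  intro i hi
  simp only [mem_filter] at hi
  exact absurd hi.2 (by omega)

lemma rowbound (B : Matrix (Fin n) (Fin n) ℝ)
    (hB0 : ∀ i j : Fin n, (j : ℕ) ≤ (i : ℕ) → B i j = 0)
    (hB1 : ∀ i j : Fin n, B i j ∈ Set.Icc (0 : ℝ) 1) (x : Fin n → ℝ) (i : Fin n) :
    -QQ x ((i : ℕ) + 1) ≤ ∑ j, B i j * x j ∧ ∑ j, B i j * x j ≤ PP x ((i : ℕ) + 1) := by
  have hs : ∑ j, B i j * x j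
      = ∑ j ∈ univ.filter (fun j : Fin n => (i : ℕ) + 1 ≤ (j : ℕ)), B i j * x j := by
    symm
    apply Finset.sum_filter_of_ne
    intro j _ hne
    by_contra hc
    exact hne (by rw [hB0 i j (by omega), zero_mul])
  constructor
  · rw [hs, QQ, ← Finset.sum_neg_distrib]
    apply Finset.sum_le_sum
    intro j _
    obtain ⟨h0, h1⟩ := hB1 i j
    rcases le_or_gt 0 (x j) with h | h
    · have : max (-(x j)) 0 = 0 := max_eq_right (by linarith)
      rw [this]; nlinarith
    · have : max (-(x j)) 0 = -(x j) := max_eq_left (by linarith)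
      rw [this]; nlinarith
  · rw [hs, PP]
    apply Finset.sum_le_sum
    intro j _
    obtain ⟨h0, h1⟩ := hB1 i j
    rcases le_or_gt 0 (x j) with h | h
    · have : max (x j) 0 = x j := max_eq_left h
      rw [this]; nlinarith
    · have : max (x j) 0 = 0 := max_eq_right (by linarith)
      rw [this]; nlinarith

lemma main_claim (B : Matrix (Fin n) (Fin n) ℝ)
    (hB0 : ∀ i j : Fin n, (j : ℕ) ≤ (i : ℕ) → B i j = 0)
    (hB1 : ∀ i j : Fin n, B i j ∈ Set.Icc (0 : ℝ) 1) (x : Fin n → ℝ)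
    (hx : ∀ i, x i + ∑ j, B i j * x j = 1) :
    ∀ m, 1 ≤ m → m ≤ n →
      1 ≤ PP x (n - m) ∧ QQ x (n - m) ≤ (Nat.fib m : ℝ) - 1 ∧
      PP x (n - m) + QQ x (n - m) ≤ (Nat.fib (m + 1) : ℝ) ∧
      PP x (n - m) ≤ 1 + (Nat.fib m : ℝ) := by
  intro m hm
  induction m, hm using Nat.le_induction with
  | base =>
      intro h1n
      have hk : n - 1 < n := by omega
      set i₀ : Fin n := ⟨n - 1, hk⟩ with hi₀
      have hxval : x i₀ = 1 := by
        have := hx i₀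
        rw [Finset.sum_eq_zero (fun j _ => by
          rw [hB0 i₀ j (by simp [hi₀]; omega)]; ring)] at this
        linarith
      have hPP : PP x (n - 1) = 1 := by
        rw [PP_succ x hk, show n - 1 + 1 = n by omega, PP_empty, hxval]
        norm_num
      have hQQ : QQ x (n - 1) = 0 := by
        rw [QQ_succ x hk, show n - 1 + 1 = n by omega, QQ_empty, hxval]
        norm_num
      rw [hPP, hQQ]
      norm_num [Nat.fib_one, Nat.fib_two]
  | succ m hm IH =>
      intro hmn
      have IH' := IH (by omega)
      obtain ⟨ih1, ih2, ih3, ih4⟩ := IH'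
      have hk : n - (m + 1) < n := by omega
      set i₁ : Fin n := ⟨n - (m + 1), hk⟩ with hi₁
      have hsucc : n - (m + 1) + 1 = n - m := by omega
      have hrow := rowbound B hB0 hB1 x i₁
      rw [show (i₁ : ℕ) + 1 = n - m by simp [hi₁]; omega] at hrow
      have hxv : x i₁ = 1 - ∑ j, B i₁ j * x j := by have := hx i₁; linarith
      have hxub : x i₁ ≤ 1 + QQ x (n - m) := by rw [hxv]; linarith [hrow.1]
      have hxlb : 1 - PP x (n - m) ≤ x i₁ := by rw [hxv]; linarith [hrow.2]
      have hPPs : PP x (n - (m + 1)) = max (x i₁) 0 + PP x (n - m) := by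
        rw [PP_succ x hk, hsucc]
      have hQQs : QQ x (n - (m + 1)) = max (-(x i₁)) 0 + QQ x (n - m) := by
        rw [QQ_succ x hk, hsucc]
      have hfib2 : (Nat.fib (m + 2) : ℝ) = (Nat.fib m : ℝ) + (Nat.fib (m + 1) : ℝ) := by
        rw [← Nat.cast_add, ← Nat.fib_add_two]
      have hmono : (Nat.fib m : ℝ) ≤ (Nat.fib (m + 1) : ℝ) := by
        exact_mod_cast Nat.fib_le_fib_succ
      rcases le_or_gt 0 (x i₁) with hc | hc
      · have h1 : max (x i₁) 0 = x i₁ := max_eq_left hc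
        have h2 : max (-(x i₁)) 0 = 0 := max_eq_right (by linarith)
        rw [hPPs, hQQs, h1, h2]
        refine ⟨by linarith, by linarith, by linarith, by linarith⟩
      · have h1 : max (x i₁) 0 = 0 := max_eq_right (by linarith)
        have h2 : max (-(x i₁)) 0 = -(x i₁) := max_eq_left (by linarith)
        rw [hPPs, hQQs, h1, h2]
        refine ⟨by linarith, by linarith, by linarith, by linarith⟩

lemma key_bound (hn : 3 ≤ n) (B : Matrix (Fin n) (Fin n) ℝ)
    (hB0 : ∀ i j : Fin n, (j : ℕ) ≤ (i : ℕ) → B i j = 0)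
    (hB1 : ∀ i j : Fin n, B i j ∈ Set.Icc (0 : ℝ) 1) (x : Fin n → ℝ)
    (hx : ∀ i, x i + ∑ j, B i j * x j = 1) :
    2 - (Nat.fib (n - 1) : ℝ) ≤ ∑ i, x i ∧ ∑ i, x i ≤ 2 + (Nat.fib (n - 1) : ℝ) := by
  have h0n : 0 < n := by omega
  set i₀ : Fin n := ⟨0, h0n⟩ with hi₀
  have huniv : (univ : Finset (Fin n)) = insert i₀ (univ.filter (fun i : Fin n => 1 ≤ (i : ℕ))) := by
    ext i
    simp only [mem_univ, mem_insert, mem_filter, true_and, true_iff, hi₀, Fin.ext_iff]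
    omega
  have hsum : ∑ i, x i = x i₀ + ∑ i ∈ univ.filter (fun i : Fin n => 1 ≤ (i : ℕ)), x i := by
    conv_lhs => rw [huniv]
    rw [Finset.sum_insert (by simp [hi₀])]
  have hrow : ∑ j, B i₀ j * x j
      = ∑ j ∈ univ.filter (fun j : Fin n => 1 ≤ (j : ℕ)), B i₀ j * x j := by
    symm
    apply Finset.sum_filter_of_ne
    intro j _ hne
    by_contra hc
    exact hne (by rw [hB0 i₀ j (by simp only [hi₀]; omega), zero_mul])
  have hx0 : x i₀ = 1 - ∑ j ∈ univ.filter (fun j : Fin n => 1 ≤ (j : ℕ)), B i₀ j * x j := by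
    have := hx i₀; rw [hrow] at this; linarith
  have hS : ∑ i, x i
      = 1 + ∑ j ∈ univ.filter (fun j : Fin n => 1 ≤ (j : ℕ)), (x j - B i₀ j * x j) := by
    rw [hsum, hx0, Finset.sum_sub_distrib]; ring
  have hub : ∑ j ∈ univ.filter (fun j : Fin n => 1 ≤ (j : ℕ)), (x j - B i₀ j * x j)
      ≤ PP x 1 := by
    rw [PP]
    apply Finset.sum_le_sum
    intro j _
    obtain ⟨h0, h1⟩ := hB1 i₀ j
    rcases le_or_gt 0 (x j) with h | h
    · rw [max_eq_left h]; nlinarith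
    · rw [max_eq_right (by linarith)]; nlinarith
  have hlb : -QQ x 1
      ≤ ∑ j ∈ univ.filter (fun j : Fin n => 1 ≤ (j : ℕ)), (x j - B i₀ j * x j) := by
    rw [QQ, ← Finset.sum_neg_distrib]
    apply Finset.sum_le_sum
    intro j _
    obtain ⟨h0, h1⟩ := hB1 i₀ j
    rcases le_or_gt 0 (x j) with h | h
    · rw [max_eq_right (by linarith)]; nlinarith
    · rw [max_eq_left (by linarith)]; nlinarith
  have hclaim := main_claim B hB0 hB1 x hx (n - 1) (by omega) (by omega)
  rw [show n - (n - 1) = 1 by omega] at hclaim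
  obtain ⟨c1, c2, c3, c4⟩ := hclaim
  constructor
  · rw [hS]; linarith
  · rw [hS]; linarith

lemma construct_s13 {n t r : ℕ} (ht : t = 1 ∨ t = 2) (htr : t ≤ r) (hrn : r ≤ n - 1)
    (hn : 1 ≤ n) :
    ∃ B : Matrix (Fin n) (Fin n) ℝ,
      (∀ i j : Fin n, (j : ℕ) ≤ (i : ℕ) → B i j = 0) ∧
      (∀ i j : Fin n, B i j ∈ Set.Icc (0 : ℝ) 1) ∧
      ∑ i : Fin n, ∑ j : Fin n, (1 + B)⁻¹ i j =
        (if Even (r + t) then 2 + ((Nat.fib (r-1) : ℝ) + ((n-1-r : ℕ) : ℝ) * (Nat.fib r))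
         else 2 - ((Nat.fib (r-1) : ℝ) + ((n-1-r : ℕ) : ℝ) * (Nat.fib r))) := by
  set B : Matrix (Fin n) (Fin n) ℝ := fun i j =>
    if (i : ℕ) < (j : ℕ) ∧ fam t (min (n-1-(j:ℕ)) r) * fam t (min (n-1-(i:ℕ)) r) < 0
    then 1 else 0 with hB
  have hB0 : ∀ i j : Fin n, (j : ℕ) ≤ (i : ℕ) → B i j = 0 := by
    intro i j hij
    rw [hB]
    exact if_neg (by push_neg; intro h; omega)
  have hB1 : ∀ i j : Fin n, B i j ∈ Set.Icc (0 : ℝ) 1 := by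
    intro i j
    rw [hB]
    dsimp only
    split_ifs <;> norm_num
  set x : Fin n → ℝ := fun i => fam t (min (n-1-(i:ℕ)) r) with hxdef
  have hx : ∀ i, x i + ∑ j, B i j * x j = 1 := by
    intro i
    have hin : (i : ℕ) < n := i.isLt
    set p : ℕ := n - 1 - (i : ℕ) with hp
    have hpn : p ≤ n := by omega
    have hstep : ∑ j, B i j * x j
        = ∑ q ∈ range p, (if fam t (min q r) * fam t (min p r) < 0 then fam t (min q r) else 0) := by
      have e1 : ∑ j, B i j * x j
          = ∑ jv ∈ range n, (if ((i:ℕ) < jv ∧ fam t (min (n-1-jv) r) * fam t (min p r) < 0)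
              then fam t (min (n-1-jv) r) else 0) := by
        rw [← Fin.sum_univ_eq_sum_range
          (fun jv => (if ((i:ℕ) < jv ∧ fam t (min (n-1-jv) r) * fam t (min p r) < 0)
              then fam t (min (n-1-jv) r) else 0)) n]
        refine Finset.sum_congr rfl fun j _ => ?_
        rw [hB, hxdef]
        dsimp only
        rw [ite_mul, one_mul, zero_mul]
      have e2 : ∀ jv ∈ range n,
          (if ((i:ℕ) < jv ∧ fam t (min (n-1-jv) r) * fam t (min p r) < 0)
              then fam t (min (n-1-jv) r) else 0)
          = (fun q => if (q < p ∧ fam t (min q r) * fam t (min p r) < 0)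
              then fam t (min q r) else 0) (n - 1 - jv) := by
        intro jv hjv
        simp only [mem_range] at hjv
        refine if_congr (and_congr_left' ?_) rfl rfl
        rw [hp]
        omega
      rw [e1, Finset.sum_congr rfl e2,
        Finset.sum_range_reflect
          (fun q => if (q < p ∧ fam t (min q r) * fam t (min p r) < 0)
            then fam t (min q r) else 0) n]
      rw [range_eq_Ico, ← Finset.sum_Ico_consecutive _ (Nat.zero_le p) hpn, ← range_eq_Ico]
      have e3 : ∑ q ∈ Finset.Ico p n, (if (q < p ∧ fam t (min q r) * fam t (min p r) < 0)
          then fam t (min q r) else 0) = 0 := by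
        refine Finset.sum_eq_zero fun q hq => ?_
        simp only [Finset.mem_Ico] at hq
        exact if_neg (by push_neg; intro h; omega)
      rw [e3, add_zero]
      refine Finset.sum_congr rfl fun q hq => ?_
      simp only [mem_range] at hq
      exact if_congr (by tauto) rfl rfl
    rw [hstep, hxdef]
    exact yrel ht htr p
  refine ⟨B, hB0, hB1, ?_⟩
  rw [sum_inv_eq B hB0 x hx]
  rw [show ∑ i, x i = ∑ iv ∈ range n, fam t (min (n-1-iv) r) by
    rw [← Fin.sum_univ_eq_sum_range (fun iv => fam t (min (n-1-iv) r)) n]]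
  rw [Finset.sum_range_reflect (fun q => fam t (min q r)) n]
  exact ysum ht htr hrn hn

lemma exists_x {n : ℕ} (B : Matrix (Fin n) (Fin n) ℝ)
    (hB0 : ∀ i j : Fin n, (j : ℕ) ≤ (i : ℕ) → B i j = 0) :
    ∃ x : Fin n → ℝ, (∀ i, x i + ∑ j, B i j * x j = 1) ∧
      ∑ i, x i = ∑ i : Fin n, ∑ j : Fin n, (1 + B)⁻¹ i j := by
  have hdet : IsUnit (1 + B).det := by rw [det_one_add B hB0]; exact isUnit_one
  set x : Fin n → ℝ := (1 + B)⁻¹.mulVec (fun _ => (1:ℝ)) with hxdef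
  have hmul : (1 + B).mulVec x = fun _ => (1:ℝ) := by
    rw [hxdef, Matrix.mulVec_mulVec, Matrix.mul_nonsing_inv _ hdet, Matrix.one_mulVec]
  have hx : ∀ i, x i + ∑ j, B i j * x j = 1 := by
    intro i
    have := congrFun hmul i
    simp only [Matrix.mulVec, dotProduct, Matrix.add_apply, add_mul,
      Finset.sum_add_distrib, Matrix.one_apply] at this
    rw [show ∑ j, (if i = j then (1:ℝ) else 0) * x j = x i by
      simp [ite_mul, Finset.sum_ite_eq]] at this
    exact this
  exact ⟨x, hx, (sum_inv_eq B hB0 x hx).symm⟩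

/-- For n ≥ 3, over the set G_n of matrices I + B with B strictly upper
triangular with entries in [0,1], the max of S(A⁻¹) is 2 + F_{n-1} and the
min is 2 − F_{n-1}. -/
theorem stmt_13 (n : ℕ) (hn : 3 ≤ n) :
    IsGreatest {S : ℝ | ∃ B : Matrix (Fin n) (Fin n) ℝ,
        (∀ i j : Fin n, (j : ℕ) ≤ (i : ℕ) → B i j = 0) ∧
        (∀ i j : Fin n, B i j ∈ Set.Icc (0 : ℝ) 1) ∧
        ∑ i : Fin n, ∑ j : Fin n, (1 + B)⁻¹ i j = S}
      (2 + (Nat.fib (n - 1) : ℝ)) ∧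
    IsLeast {S : ℝ | ∃ B : Matrix (Fin n) (Fin n) ℝ,
        (∀ i j : Fin n, (j : ℕ) ≤ (i : ℕ) → B i j = 0) ∧
        (∀ i j : Fin n, B i j ∈ Set.Icc (0 : ℝ) 1) ∧
        ∑ i : Fin n, ∑ j : Fin n, (1 + B)⁻¹ i j = S}
      (2 - (Nat.fib (n - 1) : ℝ)) := by
  have hfib3 : (Nat.fib (n-3) : ℝ) + (Nat.fib (n-2) : ℝ) = (Nat.fib (n-1) : ℝ) := by
    rw [show n - 2 = (n - 3) + 1 by omega, show n - 1 = (n - 3) + 2 by omega]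
    exact fib_cast_add
  have hnr : n - 1 - (n - 2) = 1 := by omega
  have hnr2 : n - 2 - 1 = n - 3 := by omega
  constructor
  · constructor
    · -- membership for the max
      rcases Nat.even_or_odd n with he | he
      · have hn4 : 4 ≤ n := by rcases he with ⟨k, hk⟩; omega
        obtain ⟨B, h0, h1, h3⟩ := construct_s13 (n := n) (t := 2) (r := n - 2)
          (Or.inr rfl) (by omega) (by omega) (by omega)
        refine ⟨B, h0, h1, ?_⟩
        rw [h3, if_pos (by rw [show n - 2 + 2 = n by omega]; exact he), hnr, hnr2]
        push_cast
        linarith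
      · obtain ⟨B, h0, h1, h3⟩ := construct_s13 (n := n) (t := 1) (r := n - 2)
          (Or.inl rfl) (by omega) (by omega) (by omega)
        refine ⟨B, h0, h1, ?_⟩
        rw [h3, if_pos (by rw [show n - 2 + 1 = n - 1 by omega]; exact Nat.Odd.sub_odd he odd_one),
          hnr, hnr2]
        push_cast
        linarith
    · -- upper bound
      intro S hS
      obtain ⟨B, h0, h1, h3⟩ := hS
      obtain ⟨x, hx, hsx⟩ := exists_x B h0
      have := (key_bound hn B h0 h1 x hx).2
      rw [hsx, h3] at this
      exact this
  · constructor
    · -- membership for the min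
      rcases Nat.even_or_odd n with he | he
      · obtain ⟨B, h0, h1, h3⟩ := construct_s13 (n := n) (t := 1) (r := n - 2)
          (Or.inl rfl) (by omega) (by omega) (by omega)
        refine ⟨B, h0, h1, ?_⟩
        rw [h3, if_neg (by
            rw [show n - 2 + 1 = n - 1 by omega]
            exact Nat.not_even_iff_odd.mpr (Nat.Even.sub_odd (by omega) he odd_one)),
          hnr, hnr2]
        push_cast
        linarith
      · rcases eq_or_lt_of_le hn with h3n | h5n
        · -- n = 3
          obtain ⟨B, h0, h1, h3⟩ := construct_s13 (n := n) (t := 1) (r := 2)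
            (Or.inl rfl) (by omega) (by omega) (by omega)
          refine ⟨B, h0, h1, ?_⟩
          rw [h3, if_neg (by decide)]
          rw [show n - 1 - 2 = 0 by omega, show n - 1 = 2 by omega]
          norm_num [Nat.fib_one, Nat.fib_two]
        · -- n odd, n ≥ 5
          have hn5 : 5 ≤ n := by
            rcases he with ⟨k, hk⟩; omega
          obtain ⟨B, h0, h1, h3⟩ := construct_s13 (n := n) (t := 2) (r := n - 2)
            (Or.inr rfl) (by omega) (by omega) (by omega)
          refine ⟨B, h0, h1, ?_⟩
          rw [h3, if_neg (by
              rw [show n - 2 + 2 = n by omega]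
              exact Nat.not_even_iff_odd.mpr he),
            hnr, hnr2]
          push_cast
          linarith
    · -- lower bound
      intro S hS
      obtain ⟨B, h0, h1, h3⟩ := hS
      obtain ⟨x, hx, hsx⟩ := exists_x B h0
      have := (key_bound hn B h0 h1 x hx).1
      rw [hsx, h3] at this
      exact this
end

section
/- Let W_n be the set of n×n matrices A with A_{ij} = 1 for j > i, A_{ii} = 2, and A_{ij} ∈ {1,2} for j < i. For n ≥ 3, an integer S equals det(A) for some A ∈ W_n if and only if 3 − F_{n-1} ≤ S ≤ 3 + F_{n-1}. -/
def xseq (c : ℕ → ℕ → ℤ) : ℕ → ℤ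
  | i => 1 - ∑ j ∈ (Finset.range i).attach, c i j.1 * xseq c j.1
decreasing_by exact Finset.mem_range.mp j.2

lemma xseq_eq (c : ℕ → ℕ → ℤ) (i : ℕ) :
    xseq c i = 1 - ∑ j ∈ Finset.range i, c i j * xseq c j := by
  rw [xseq, ← Finset.sum_attach (Finset.range i) (fun j => c i j * xseq c j)]

lemma det_bridge (n : ℕ) (c : ℕ → ℕ → ℤ) :
    (Matrix.of fun i j : Fin n =>
      if (i : ℕ) = (j : ℕ) then (2:ℤ) else if (j : ℕ) < (i : ℕ) then 1 + c i j else 1).det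
    = 1 + ∑ k ∈ Finset.range n, xseq c k := by
  set x : Fin n → ℤ := fun i => xseq c i with hx
  set D : Matrix (Fin n) (Fin n) ℤ := Matrix.of fun i j =>
    if (i : ℕ) = (j : ℕ) then (1:ℤ) else if (j : ℕ) < (i : ℕ) then c i j else 0 with hD
  have hDx : ∀ i : Fin n, ∑ j : Fin n, D i j * x j = 1 := by
    intro i
    have h1 : ∑ j : Fin n, D i j * x j
        = ∑ j ∈ Finset.range n,
            (if (i : ℕ) = j then (1:ℤ) else if j < (i : ℕ) then c i j else 0) * xseq c j :=
      Fin.sum_univ_eq_sum_range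
        (fun j => (if (i : ℕ) = j then (1:ℤ) else if j < (i : ℕ) then c i j else 0) * xseq c j) n
    rw [h1]
    have h2 : ∑ j ∈ Finset.range n,
            (if (i : ℕ) = j then (1:ℤ) else if j < (i : ℕ) then c i j else 0) * xseq c j
        = ∑ j ∈ Finset.range ((i : ℕ) + 1),
            (if (i : ℕ) = j then (1:ℤ) else if j < (i : ℕ) then c i j else 0) * xseq c j := by
      refine (Finset.sum_subset ?_ ?_).symm
      · exact Finset.range_subset_range.mpr i.2
      · intro j hj hj'
        simp only [Finset.mem_range, not_lt] at hj hj'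
        have h3 : ¬ ((i:ℕ) = j) := by omega
        have h4 : ¬ (j < (i:ℕ)) := by omega
        simp [h3, h4]
    rw [h2, Finset.sum_range_succ]
    have h5 : ∀ j ∈ Finset.range (i:ℕ),
        (if (i : ℕ) = j then (1:ℤ) else if j < (i : ℕ) then c i j else 0) * xseq c j
        = c i j * xseq c j := by
      intro j hj
      simp only [Finset.mem_range] at hj
      have : ¬ ((i:ℕ) = j) := by omega
      simp [this, hj]
    rw [Finset.sum_congr rfl h5]
    have h6 : (if (i:ℕ) = (i:ℕ) then (1:ℤ) else if (i:ℕ) < (i:ℕ) then c i i else 0) = 1 :=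
      if_pos rfl
    rw [h6, one_mul, xseq_eq c i]
    ring
  set E : Matrix (Fin n) (Fin n) ℤ :=
    1 + Matrix.replicateCol Unit x * Matrix.replicateRow Unit (fun _ : Fin n => (1:ℤ)) with hE
  have hfact : (Matrix.of fun i j : Fin n =>
      if (i : ℕ) = (j : ℕ) then (2:ℤ) else if (j : ℕ) < (i : ℕ) then 1 + c i j else 1)
      = D * E := by
    ext i k
    rw [Matrix.mul_apply]
    have : ∀ j : Fin n, D i j * E j k
        = D i j * (if j = k then 1 else 0) + D i j * x j := by
      intro j
      have hEjk : E j k = (if j = k then 1 else 0) + x j := by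
        rw [hE]
        simp [Matrix.add_apply, Matrix.one_apply, Matrix.mul_apply, Matrix.replicateCol_apply,
          Matrix.replicateRow_apply]
      rw [hEjk]; ring
    rw [Finset.sum_congr rfl (fun j _ => this j), Finset.sum_add_distrib, hDx]
    have : ∑ j : Fin n, D i j * (if j = k then 1 else 0) = D i k := by
      simp [mul_ite]
    rw [this]
    have hL : (Matrix.of fun i j : Fin n =>
        if (i : ℕ) = (j : ℕ) then (2:ℤ) else if (j : ℕ) < (i : ℕ) then 1 + c i j else 1) i k
        = if (i : ℕ) = (k : ℕ) then (2:ℤ) else if (k : ℕ) < (i : ℕ) then 1 + c i k else 1 := rfl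
    have hDik : D i k = if (i:ℕ) = (k:ℕ) then (1:ℤ) else if (k:ℕ) < (i:ℕ) then c i k else 0 := rfl
    rw [hL, hDik]
    split_ifs <;> ring
  rw [hfact, Matrix.det_mul]
  have hDdet : D.det = 1 := by
    have ht : D.BlockTriangular OrderDual.toDual := by
      intro i j h
      have : (i:ℕ) < (j:ℕ) := h
      have h1 : ¬ ((i:ℕ) = (j:ℕ)) := by omega
      have h2 : ¬ ((j:ℕ) < (i:ℕ)) := by omega
      show (if (i:ℕ)=(j:ℕ) then (1:ℤ) else if (j:ℕ)<(i:ℕ) then c i j else 0) = 0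
      rw [if_neg h1, if_neg h2]
    rw [Matrix.det_of_lowerTriangular D ht]
    have hone : ∀ i : Fin n, D i i = 1 := fun i => if_pos rfl
    rw [Finset.prod_congr rfl (fun i _ => hone i)]
    exact Finset.prod_const_one
  have hEdet : E.det = 1 + ∑ k ∈ Finset.range n, xseq c k := by
    rw [hE, Matrix.det_one_add_replicateCol_mul_replicateRow]
    congr 1
    show ∑ j : Fin n, 1 * x j = _
    simp only [one_mul]
    exact Fin.sum_univ_eq_sum_range (fun k => xseq c k) n
  rw [hDdet, hEdet, one_mul]

section fwd
variable (c : ℕ → ℕ → ℤ)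

noncomputable def Pp (k : ℕ) : ℤ := ∑ j ∈ Finset.range k, max (xseq c j) 0
noncomputable def Qq (k : ℕ) : ℤ := ∑ j ∈ Finset.range k, max (-(xseq c j)) 0

lemma sum_eq_P_sub_Q (k : ℕ) :
    ∑ j ∈ Finset.range k, xseq c j = Pp c k - Qq c k := by
  rw [Pp, Qq, ← Finset.sum_sub_distrib]
  refine Finset.sum_congr rfl fun j _ => ?_
  rcases le_total (xseq c j) 0 with h | h
  · rw [max_eq_right h, max_eq_left (by omega)]; omega
  · rw [max_eq_left h, max_eq_right (by omega)]; omega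

lemma t_bounds (hc : ∀ i j, c i j = 0 ∨ c i j = 1) (i k : ℕ) :
    -Qq c k ≤ ∑ j ∈ Finset.range k, c i j * xseq c j ∧
    ∑ j ∈ Finset.range k, c i j * xseq c j ≤ Pp c k := by
  constructor
  · rw [Qq, ← Finset.sum_neg_distrib]
    refine Finset.sum_le_sum fun j _ => ?_
    rcases hc i j with h | h <;> rw [h]
    · rw [zero_mul]
      have := le_max_right (-(xseq c j)) (0:ℤ); omega
    · rw [one_mul]
      have := le_max_left (-(xseq c j)) (0:ℤ); omega
  · rw [Pp]
    refine Finset.sum_le_sum fun j _ => ?_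
    rcases hc i j with h | h <;> rw [h]
    · rw [zero_mul]; exact le_max_right _ _
    · rw [one_mul]; exact le_max_left _ _

lemma x_bounds (hc : ∀ i j, c i j = 0 ∨ c i j = 1) (k : ℕ) :
    1 - Pp c k ≤ xseq c k ∧ xseq c k ≤ 1 + Qq c k := by
  have h := t_bounds c hc k k
  rw [xseq_eq c k]
  omega

lemma xseq_zero : xseq c 0 = 1 := by rw [xseq_eq]; simp

lemma invariants (hc : ∀ i j, c i j = 0 ∨ c i j = 1) :
    ∀ k, 1 ≤ k →
      1 ≤ Pp c k ∧ Pp c k ≤ (Nat.fib k : ℤ) + 1 ∧ Qq c k ≤ (Nat.fib k : ℤ) - 1 ∧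
      Pp c k + Qq c k ≤ (Nat.fib (k+1) : ℤ) := by
  intro k hk
  induction k, hk using Nat.le_induction with
  | base =>
    rw [Pp, Qq]
    simp [xseq_zero]
  | succ k hk ih =>
    obtain ⟨h1, h2, h3, h4⟩ := ih
    have hP : Pp c (k+1) = Pp c k + max (xseq c k) 0 := Finset.sum_range_succ _ k
    have hQ : Qq c (k+1) = Qq c k + max (-(xseq c k)) 0 := Finset.sum_range_succ _ k
    have hxb := x_bounds c hc k
    have hfib : (Nat.fib (k+2) : ℤ) = (Nat.fib k : ℤ) + (Nat.fib (k+1) : ℤ) := by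
      rw [Nat.fib_add_two]; push_cast; ring
    have hfibmono : (Nat.fib k : ℤ) ≤ (Nat.fib (k+1) : ℤ) := by
      exact_mod_cast Nat.fib_le_fib_succ
    have hfib' : (Nat.fib (k+1+1) : ℤ) = (Nat.fib (k+2) : ℤ) := by norm_num
    rcases le_total (xseq c k) 0 with h | h
    · rw [hP, hQ, max_eq_right h, max_eq_left (by omega)]
      refine ⟨by omega, by omega, by omega, by omega⟩
    · rw [hP, hQ, max_eq_left h, max_eq_right (by omega)]
      refine ⟨by omega, by omega, by omega, by omega⟩

lemma sum_bounds (hc : ∀ i j, c i j = 0 ∨ c i j = 1) (n : ℕ) (hn : 1 ≤ n) :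
    3 - (Nat.fib n : ℤ) ≤ 1 + ∑ j ∈ Finset.range (n+1), xseq c j ∧
    1 + ∑ j ∈ Finset.range (n+1), xseq c j ≤ 3 + (Nat.fib n : ℤ) := by
  obtain ⟨h1, h2, h3, h4⟩ := invariants c hc n hn
  have hs : ∑ j ∈ Finset.range (n+1), xseq c j
      = (Pp c n - Qq c n) + xseq c n := by
    rw [Finset.sum_range_succ, sum_eq_P_sub_Q]
  have hxb := x_bounds c hc n
  rw [hs]
  omega

end fwd

lemma max_add_max_neg (a : ℤ) : max a 0 + max (-a) 0 = |a| := by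
  rcases le_total a 0 with h | h
  · rw [max_eq_right h, max_eq_left (by omega), abs_of_nonpos h]; ring
  · rw [max_eq_left h, max_eq_right (by omega), abs_of_nonneg h]; ring

lemma sum_eq_max_sub (f : ℕ → ℤ) (k : ℕ) :
    ∑ j ∈ Finset.range k, f j
      = ∑ j ∈ Finset.range k, max (f j) 0 - ∑ j ∈ Finset.range k, max (-(f j)) 0 := by
  rw [← Finset.sum_sub_distrib]
  refine Finset.sum_congr rfl fun j _ => ?_
  rcases le_total (f j) 0 with h | h
  · rw [max_eq_right h, max_eq_left (by omega)]; omega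
  · rw [max_eq_left h, max_eq_right (by omega)]; omega

def ydef (b : ℕ) : ℕ → ℤ := fun k => if k < 2 then 1 else (-1)^(k+b) * (Nat.fib k : ℤ)

lemma ydef_pos {b k : ℕ} (hk : 2 ≤ k) (h : (k + b) % 2 = 0) :
    ydef b k = (Nat.fib k : ℤ) := by
  rw [ydef, if_neg (by omega), Even.neg_one_pow (Nat.even_iff.mpr h), one_mul]

lemma ydef_neg {b k : ℕ} (hk : 2 ≤ k) (h : (k + b) % 2 = 1) :
    ydef b k = -(Nat.fib k : ℤ) := by
  rw [ydef, if_neg (by omega), Odd.neg_one_pow (Nat.odd_iff.mpr h)]; ring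

lemma PQy (b : ℕ) : ∀ m : ℕ,
    (((m + b) % 2 = 1) →
      ∑ j ∈ Finset.range (m+2), max (ydef b j) 0 = (Nat.fib (m+2) : ℤ) + 1 ∧
      ∑ j ∈ Finset.range (m+2), max (-(ydef b j)) 0 = (Nat.fib (m+1) : ℤ) - 1) ∧
    (((m + b) % 2 = 0) →
      ∑ j ∈ Finset.range (m+2), max (ydef b j) 0 = (Nat.fib (m+1) : ℤ) + 1 ∧
      ∑ j ∈ Finset.range (m+2), max (-(ydef b j)) 0 = (Nat.fib (m+2) : ℤ) - 1) := by
  intro m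
  induction m with
  | zero =>
    have h0 : ydef b 0 = 1 := rfl
    have h1 : ydef b 1 = 1 := rfl
    constructor <;> intro hp <;> constructor <;>
      simp [Finset.sum_range_succ, h0, h1, Nat.fib_one, Nat.fib_two]
  | succ m ih =>
    have hfib : (Nat.fib (m+3) : ℤ) = (Nat.fib (m+1) : ℤ) + (Nat.fib (m+2) : ℤ) := by
      have := Nat.fib_add_two (n := m+1)
      push_cast [this]; ring
    have hfpos : (0:ℤ) ≤ (Nat.fib (m+2) : ℤ) := by positivity
    constructor <;> intro hp
    · have hmb : (m + b) % 2 = 0 := by omega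
      obtain ⟨hP, hQ⟩ := ih.2 hmb
      have hy : ydef b (m+2) = (Nat.fib (m+2) : ℤ) := ydef_pos (by omega) (by omega)
      constructor
      · rw [Finset.sum_range_succ, hP, hy, max_eq_left hfpos, hfib]; ring
      · rw [Finset.sum_range_succ, hQ, hy, max_eq_right (by omega)]; ring
    · have hmb : (m + b) % 2 = 1 := by omega
      obtain ⟨hP, hQ⟩ := ih.1 hmb
      have hy : ydef b (m+2) = -(Nat.fib (m+2) : ℤ) := ydef_neg (by omega) (by omega)
      constructor
      · rw [Finset.sum_range_succ, hP, hy, max_eq_right (by omega)]; ring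
      · rw [Finset.sum_range_succ, hQ, hy, neg_neg, max_eq_left hfpos, hfib]; ring

lemma subset_sum_interval :
    ∀ (L : ℕ) (y : ℕ → ℤ),
      (∀ k, k < L → |y k| ≤ 1 + ∑ j ∈ Finset.range k, |y j|) →
      ∀ t : ℤ,
      -∑ j ∈ Finset.range L, max (-(y j)) 0 ≤ t →
      t ≤ ∑ j ∈ Finset.range L, max (y j) 0 →
      ∃ ε : ℕ → ℤ, (∀ j, ε j = 0 ∨ ε j = 1) ∧ ∑ j ∈ Finset.range L, ε j * y j = t := by
  intro L
  induction L with
  | zero =>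
    intro y hy t h1 h2
    refine ⟨fun _ => 0, fun _ => Or.inl rfl, ?_⟩
    simp at h1 h2 ⊢
    omega
  | succ L ih =>
    intro y hy t h1 h2
    set P : ℤ := ∑ j ∈ Finset.range L, max (y j) 0 with hP
    set Q : ℤ := ∑ j ∈ Finset.range L, max (-(y j)) 0 with hQ
    have habs : ∑ j ∈ Finset.range L, |y j| = P + Q := by
      rw [hP, hQ, ← Finset.sum_add_distrib]
      exact Finset.sum_congr rfl fun j _ => (max_add_max_neg (y j)).symm
    have hyL : |y L| ≤ 1 + P + Q := by
      have := hy L (Nat.lt_succ_self L)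
      omega
    have hmaxL := max_add_max_neg (y L)
    have hmL1 : 0 ≤ max (y L) 0 := le_max_right _ _
    have hmL2 : 0 ≤ max (-(y L)) 0 := le_max_right _ _
    have h2' : t ≤ P + max (y L) 0 := by
      rw [Finset.sum_range_succ] at h2; omega
    have h1' : -(Q + max (-(y L)) 0) ≤ t := by
      rw [Finset.sum_range_succ] at h1; omega
    have hy' : ∀ k, k < L → |y k| ≤ 1 + ∑ j ∈ Finset.range k, |y j| :=
      fun k hk => hy k (by omega)
    by_cases hcase : -Q ≤ t ∧ t ≤ P
    · obtain ⟨ε, hε, hsum⟩ := ih y hy' t hcase.1 hcase.2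
      refine ⟨fun j => if j = L then 0 else ε j, fun j => ?_, ?_⟩
      · by_cases hj : j = L
        · simp [hj]
        · simpa [hj] using hε j
      · have hss : ∑ j ∈ Finset.range L, (if j = L then (0:ℤ) else ε j) * y j
            = ∑ j ∈ Finset.range L, ε j * y j :=
          Finset.sum_congr rfl fun j hj => by
            rw [if_neg (by simp at hj; omega)]
        rw [Finset.sum_range_succ, hss, hsum]
        simp
    · have hb1 : -Q ≤ t - y L := by
        rcases le_total (y L) 0 with h | h
        · rw [abs_of_nonpos h] at hyL
          rw [max_eq_right h] at h2'
          rw [max_eq_left (by omega)] at h1'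
          omega
        · rw [abs_of_nonneg h] at hyL
          rw [max_eq_left h] at h2'
          rw [max_eq_right (by omega)] at h1'
          omega
      have hb2 : t - y L ≤ P := by
        rcases le_total (y L) 0 with h | h
        · rw [abs_of_nonpos h] at hyL
          rw [max_eq_right h] at h2'
          rw [max_eq_left (by omega)] at h1'
          omega
        · rw [abs_of_nonneg h] at hyL
          rw [max_eq_left h] at h2'
          rw [max_eq_right (by omega)] at h1'
          omega
      obtain ⟨ε, hε, hsum⟩ := ih y hy' (t - y L) hb1 hb2
      refine ⟨fun j => if j = L then 1 else ε j, fun j => ?_, ?_⟩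
      · by_cases hj : j = L
        · simp [hj]
        · simpa [hj] using hε j
      · have hss : ∑ j ∈ Finset.range L, (if j = L then (1:ℤ) else ε j) * y j
            = ∑ j ∈ Finset.range L, ε j * y j :=
          Finset.sum_congr rfl fun j hj => by
            rw [if_neg (by simp at hj; omega)]
        rw [Finset.sum_range_succ, hss, hsum]
        simp

lemma construct_s17 (l : ℕ) (m : ℤ)
    (hm1 : -(Nat.fib (l+2) : ℤ) ≤ m) (hm2 : m ≤ (Nat.fib (l+2) : ℤ)) :
    ∃ c : ℕ → ℕ → ℤ, (∀ i j, c i j = 0 ∨ c i j = 1) ∧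
      1 + ∑ j ∈ Finset.range (l+2+1), xseq c j = 3 + m := by
  set b : ℕ := if 0 ≤ m then (l+3) % 2 else (l+2) % 2 with hbdef
  have hbpar : (0 ≤ m → (l + b) % 2 = 1) ∧ (m < 0 → (l + b) % 2 = 0) := by
    constructor <;> intro h
    · rw [hbdef, if_pos h]; omega
    · rw [hbdef, if_neg (by omega)]; omega
  set y := ydef b with hy
  set P : ℤ := ∑ j ∈ Finset.range (l+2), max (y j) 0 with hP
  set Q : ℤ := ∑ j ∈ Finset.range (l+2), max (-(y j)) 0 with hQ
  have hfibL : (Nat.fib (l+2) : ℤ) = (Nat.fib l : ℤ) + (Nat.fib (l+1) : ℤ) := by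
    have := Nat.fib_add_two (n := l)
    push_cast [this]; ring
  have hfl : (0:ℤ) ≤ (Nat.fib l : ℤ) := by positivity
  have hfl1 : (0:ℤ) ≤ (Nat.fib (l+1) : ℤ) := by positivity
  -- closed forms for P and Q
  have hPQ : (0 ≤ m → P = (Nat.fib (l+2) : ℤ) + 1 ∧ Q = (Nat.fib (l+1) : ℤ) - 1) ∧
      (m < 0 → P = (Nat.fib (l+1) : ℤ) + 1 ∧ Q = (Nat.fib (l+2) : ℤ) - 1) := by
    constructor <;> intro h
    · rw [hP, hQ, hy]
      exact (PQy b l).1 (hbpar.1 h)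
    · rw [hP, hQ, hy]
      exact (PQy b l).2 (hbpar.2 h)
  -- the adjusting value
  set t : ℤ := (P - Q) - 1 - m with ht
  have htlow : -Q ≤ t := by
    rcases le_or_gt 0 m with h | h
    · obtain ⟨hp, hq⟩ := hPQ.1 h; rw [ht, hp, hq]; omega
    · obtain ⟨hp, hq⟩ := hPQ.2 h; rw [ht, hp, hq]; omega
  have hthigh : t ≤ P := by
    rcases le_or_gt 0 m with h | h
    · obtain ⟨hp, hq⟩ := hPQ.1 h; rw [ht, hp, hq]; omega
    · obtain ⟨hp, hq⟩ := hPQ.2 h; rw [ht, hp, hq]; omega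
  -- hypothesis for subset_sum_interval
  have habs : ∀ k, ∑ j ∈ Finset.range k, |y j|
      = ∑ j ∈ Finset.range k, max (y j) 0 + ∑ j ∈ Finset.range k, max (-(y j)) 0 := by
    intro k
    rw [← Finset.sum_add_distrib]
    exact Finset.sum_congr rfl fun j _ => (max_add_max_neg (y j)).symm
  have habs_nonneg : ∀ k, 0 ≤ ∑ j ∈ Finset.range k, |y j| :=
    fun k => Finset.sum_nonneg fun j _ => abs_nonneg _
  have hyabs : ∀ k, 2 ≤ k → |y k| = (Nat.fib k : ℤ) := by
    intro k hk
    rcases Nat.even_or_odd (k + b) with h | h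
    · rw [hy, ydef_pos hk (Nat.even_iff.mp h), abs_of_nonneg (by positivity)]
    · rw [hy, ydef_neg hk (Nat.odd_iff.mp h), abs_neg, abs_of_nonneg (by positivity)]
  have hhyp : ∀ k, k < (l+2) → |y k| ≤ 1 + ∑ j ∈ Finset.range k, |y j| := by
    intro k hk
    match k, hk with
    | 0, _ => simp [hy, ydef]
    | 1, _ =>
      have : |y 0| = 1 := by simp [hy, ydef]
      rw [Finset.sum_range_one, this]
      have : |y 1| = 1 := by simp [hy, ydef]
      omega
    | (k+2), hk =>
      have hfibk : (Nat.fib (k+2) : ℤ) = (Nat.fib k : ℤ) + (Nat.fib (k+1) : ℤ) := by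
        have := Nat.fib_add_two (n := k)
        push_cast [this]; ring
      have hfk1 : (0:ℤ) ≤ (Nat.fib (k+1) : ℤ) := by positivity
      rw [hyabs (k+2) (by omega), habs]
      rcases Nat.even_or_odd (k + b) with h | h
      · obtain ⟨hp, hq⟩ := (PQy b k).2 (Nat.even_iff.mp h)
        rw [hp, hq]; omega
      · obtain ⟨hp, hq⟩ := (PQy b k).1 (Nat.odd_iff.mp h)
        rw [hp, hq]; omega
  obtain ⟨ε, hε, hεsum⟩ := subset_sum_interval (l+2) y hhyp t htlow hthigh
  -- the coefficient matrix
  set c : ℕ → ℕ → ℤ := fun i j =>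
    if i = (l+2) then ε j
    else if i < 2 then 0
    else if j < 2 then (if (i+b) % 2 = 1 then 1 else 0)
    else if (j+i) % 2 = 1 then 1 else 0 with hc
  have hc01 : ∀ i j, c i j = 0 ∨ c i j = 1 := by
    intro i j
    rw [hc]
    dsimp only
    split
    · exact hε j
    split
    · exact Or.inl rfl
    split
    · split
      · exact Or.inr rfl
      · exact Or.inl rfl
    · split
      · exact Or.inr rfl
      · exact Or.inl rfl
  -- xseq c agrees with y below L
  have hxy : ∀ k, k < (l+2) → xseq c k = y k := by
    intro k
    induction k using Nat.strong_induction_on with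
    | _ k ih =>
      intro hkL
      rw [xseq_eq]
      have hsc : ∑ j ∈ Finset.range k, c k j * xseq c j
          = ∑ j ∈ Finset.range k, c k j * y j := by
        refine Finset.sum_congr rfl fun j hj => ?_
        rw [ih j (Finset.mem_range.mp hj) (by have := Finset.mem_range.mp hj; omega)]
      rw [hsc]
      rcases Nat.lt_or_ge k 2 with hk2 | hk2
      · interval_cases k
        · simp [hy, ydef]
        · have hc10 : c 1 0 = 0 := by rw [hc]; simp [show (1:ℕ) ≠ (l+2) by omega]
          rw [Finset.sum_range_one, hc10]
          simp [hy, ydef]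
      · obtain ⟨k, rfl⟩ : ∃ k', k = k' + 2 := ⟨k - 2, by omega⟩
        have hkne : k + 2 ≠ (l+2) := by omega
        rcases Nat.even_or_odd (k + b) with hpar | hpar
        · -- (k+2+b) even: y (k+2) = fib(k+2) > 0; c selects negative entries
          have hpar' : (k + b) % 2 = 0 := Nat.even_iff.mp hpar
          have hterm : ∀ j ∈ Finset.range (k+2), c (k+2) j * y j = -(max (-(y j)) 0) := by
            intro j hj
            have hjk : j < k + 2 := Finset.mem_range.mp hj
            rw [hc]
            dsimp only
            rw [if_neg hkne, if_neg (by omega)]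
            by_cases hj2 : j < 2
            · rw [if_pos hj2, if_neg (by omega)]
              have : y j = 1 := by rw [hy, ydef, if_pos hj2]
              rw [this]
              simp
            · rw [if_neg hj2]
              by_cases hjp : (j + (k+2)) % 2 = 1
              · rw [if_pos hjp]
                have : y j = -(Nat.fib j : ℤ) := by
                  rw [hy]; exact ydef_neg (by omega) (by omega)
                rw [this, neg_neg, max_eq_left (by positivity)]
                ring
              · rw [if_neg hjp]
                have : y j = (Nat.fib j : ℤ) := by
                  rw [hy]; exact ydef_pos (by omega) (by omega)
                rw [this, max_eq_right (neg_nonpos.mpr (by positivity))]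
                ring
          rw [Finset.sum_congr rfl hterm]
          obtain ⟨hp, hq⟩ := (PQy b k).2 hpar'
          rw [Finset.sum_neg_distrib, hq]
          have : y (k+2) = (Nat.fib (k+2) : ℤ) := by
            rw [hy]; exact ydef_pos (by omega) (by omega)
          rw [this]; ring
        · -- (k+2+b) odd: y (k+2) negative; c selects positive entries
          have hpar' : (k + b) % 2 = 1 := Nat.odd_iff.mp hpar
          have hterm : ∀ j ∈ Finset.range (k+2), c (k+2) j * y j = max (y j) 0 := by
            intro j hj
            have hjk : j < k + 2 := Finset.mem_range.mp hj
            rw [hc]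
            dsimp only
            rw [if_neg hkne, if_neg (by omega)]
            by_cases hj2 : j < 2
            · rw [if_pos hj2, if_pos (by omega)]
              have : y j = 1 := by rw [hy, ydef, if_pos hj2]
              rw [this]
              simp
            · rw [if_neg hj2]
              by_cases hjp : (j + (k+2)) % 2 = 1
              · rw [if_pos hjp]
                have : y j = (Nat.fib j : ℤ) := by
                  rw [hy]; exact ydef_pos (by omega) (by omega)
                rw [this, max_eq_left (by positivity)]
                ring
              · rw [if_neg hjp]
                have : y j = -(Nat.fib j : ℤ) := by
                  rw [hy]; exact ydef_neg (by omega) (by omega)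
                rw [this, max_eq_right (neg_nonpos.mpr (by positivity))]
                ring
          rw [Finset.sum_congr rfl hterm]
          obtain ⟨hp, hq⟩ := (PQy b k).1 hpar'
          rw [hp]
          have : y (k+2) = -(Nat.fib (k+2) : ℤ) := by
            rw [hy]; exact ydef_neg (by omega) (by omega)
          rw [this]; ring
  -- value at L
  have hxL : xseq c (l+2) = 1 - t := by
    rw [xseq_eq]
    have : ∑ j ∈ Finset.range (l+2), c (l+2) j * xseq c j = ∑ j ∈ Finset.range (l+2), ε j * y j := by
      refine Finset.sum_congr rfl fun j hj => ?_
      have hjL := Finset.mem_range.mp hj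
      rw [hxy j hjL, hc]
      dsimp only
      rw [if_pos rfl]
    rw [this, hεsum]
  refine ⟨c, hc01, ?_⟩
  rw [Finset.sum_range_succ, hxL]
  have : ∑ j ∈ Finset.range (l+2), xseq c j = ∑ j ∈ Finset.range (l+2), y j :=
    Finset.sum_congr rfl fun j hj => hxy j (Finset.mem_range.mp hj)
  rw [this, sum_eq_max_sub]
  rw [← hP, ← hQ, ht]
  ring

/-- For n ≥ 3, an integer S is det(A) for some A ∈ W_n iff
3 − F_{n-1} ≤ S ≤ 3 + F_{n-1}. -/
theorem stmt_17 (n : ℕ) (hn : 3 ≤ n) (S : ℤ) :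
    (∃ A : Matrix (Fin n) (Fin n) ℤ,
      (∀ i j : Fin n, (i : ℕ) < (j : ℕ) → A i j = 1) ∧
      (∀ i : Fin n, A i i = 2) ∧
      (∀ i j : Fin n, (j : ℕ) < (i : ℕ) → A i j = 1 ∨ A i j = 2) ∧
      A.det = S) ↔
    (3 - (Nat.fib (n - 1) : ℤ) ≤ S ∧ S ≤ 3 + (Nat.fib (n - 1) : ℤ)) := by
  constructor
  · rintro ⟨A, h1, h2, h3, hdet⟩
    obtain ⟨N, rfl⟩ : ∃ N, n = N + 1 := ⟨n - 1, by omega⟩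
    have hN : 2 ≤ N := by omega
    set c : ℕ → ℕ → ℤ := fun i j =>
      if h : j < i ∧ i < N + 1 then A ⟨i, h.2⟩ ⟨j, by omega⟩ - 1 else 0 with hcdef
    have hc : ∀ i j, c i j = 0 ∨ c i j = 1 := by
      intro i j
      rw [hcdef]
      dsimp only
      split
      · rename_i h
        rcases h3 ⟨i, h.2⟩ ⟨j, by omega⟩ h.1 with h' | h'
        · left; rw [h']; ring
        · right; rw [h']; ring
      · exact Or.inl rfl
    have hAeq : A = Matrix.of (fun i j : Fin (N+1) =>
        if (i : ℕ) = (j : ℕ) then (2:ℤ) else if (j : ℕ) < (i : ℕ) then 1 + c i j else 1) := by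
      ext i j
      rw [Matrix.of_apply]
      by_cases hij : (i : ℕ) = (j : ℕ)
      · rw [if_pos hij]
        have : i = j := Fin.ext hij
        rw [this]
        exact h2 j
      · rw [if_neg hij]
        by_cases hji : (j : ℕ) < (i : ℕ)
        · rw [if_pos hji, hcdef]
          dsimp only
          rw [dif_pos ⟨hji, i.2⟩]
          have : (⟨(i:ℕ), i.2⟩ : Fin (N+1)) = i := rfl
          rw [this]
          have : (⟨(j:ℕ), by omega⟩ : Fin (N+1)) = j := rfl
          rw [this]
          ring
        · rw [if_neg hji]
          exact h1 i j (by omega)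
    have hdet2 : A.det = 1 + ∑ k ∈ Finset.range (N+1), xseq c k := by
      rw [hAeq]; exact det_bridge (N+1) c
    have hb := sum_bounds c hc N (by omega)
    rw [hdet2] at hdet
    have hfib : N + 1 - 1 = N := by omega
    rw [hfib]
    omega
  · rintro ⟨hS1, hS2⟩
    obtain ⟨l, rfl⟩ : ∃ l, n = l + 3 := ⟨n - 3, by omega⟩
    have hfib : l + 3 - 1 = l + 2 := by omega
    rw [hfib] at hS1 hS2
    obtain ⟨c, hc01, hsum⟩ := construct_s17 l (S - 3) (by omega) (by omega)
    refine ⟨Matrix.of (fun i j : Fin (l+3) =>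
      if (i : ℕ) = (j : ℕ) then (2:ℤ) else if (j : ℕ) < (i : ℕ) then 1 + c i j else 1),
      ?_, ?_, ?_, ?_⟩
    · intro i j hij
      rw [Matrix.of_apply, if_neg (by omega), if_neg (by omega)]
    · intro i
      rw [Matrix.of_apply, if_pos rfl]
    · intro i j hji
      rw [Matrix.of_apply, if_neg (by omega), if_pos hji]
      rcases hc01 i j with h | h
      · left; rw [h]; ring
      · right; rw [h]; ring
    · rw [det_bridge (l+3) c]
      have : l + 3 = l + 2 + 1 := by omega
      rw [this] at hsum ⊢
      omega
end

section
/- For every n ≥ 3 and A ∈ W_n (entries: 1 above the diagonal, 2 on the diagonal, 1 or 2 below), det(A) satisfies 3 − F_{n-1} ≤ det(A) ≤ 3 + F_{n-1}. -/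
open Finset

private def xsW (b : ℕ → ℕ → ℤ) : ℕ → ℤ
  | k => 1 - ∑ j : Fin k, b k j.1 * xsW b j.1
  decreasing_by exact j.2

private lemma xsW_eq (b : ℕ → ℕ → ℤ) (k : ℕ) :
    xsW b k = 1 - ∑ j ∈ range k, b k j * xsW b j := by
  rw [xsW, Fin.sum_univ_eq_sum_range (fun j => b k j * xsW b j) k]

private lemma xsW_zero (b : ℕ → ℕ → ℤ) : xsW b 0 = 1 := by rw [xsW_eq]; simp

private def PsW (b : ℕ → ℕ → ℤ) (k : ℕ) : ℤ := ∑ j ∈ range k, max (xsW b j) 0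
private def NsW (b : ℕ → ℕ → ℤ) (k : ℕ) : ℤ := ∑ j ∈ range k, max (-(xsW b j)) 0

private lemma NsW_nonneg (b : ℕ → ℕ → ℤ) (k : ℕ) : 0 ≤ NsW b k :=
  Finset.sum_nonneg fun j _ => le_max_right _ _

private lemma PsW_one_le (b : ℕ → ℕ → ℤ) (k : ℕ) (hk : 1 ≤ k) : 1 ≤ PsW b k := by
  have h1 : PsW b 1 = 1 := by simp [PsW, xsW_zero]
  have : PsW b 1 ≤ PsW b k := by
    apply Finset.sum_le_sum_of_subset_of_nonneg
    · exact Finset.range_subset_range.2 hk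
    · intro j _ _; exact le_max_right _ _
  omega

private lemma xsW_bounds (b : ℕ → ℕ → ℤ) (hb : ∀ k j, b k j = 0 ∨ b k j = 1) (k : ℕ) :
    1 - PsW b k ≤ xsW b k ∧ xsW b k ≤ 1 + NsW b k := by
  have hup : ∑ j ∈ range k, b k j * xsW b j ≤ PsW b k := by
    apply Finset.sum_le_sum
    intro j _
    rcases hb k j with h | h <;> rw [h]
    · rw [zero_mul]; exact le_max_right _ _
    · rw [one_mul]; exact le_max_left _ _
  have hlo : -(NsW b k) ≤ ∑ j ∈ range k, b k j * xsW b j := by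
    rw [NsW, ← Finset.sum_neg_distrib]
    apply Finset.sum_le_sum
    intro j _
    rcases hb k j with h | h <;> rw [h]
    · rw [zero_mul]; exact neg_nonpos.2 (le_max_right _ _)
    · rw [one_mul]; linarith [le_max_left (-(xsW b j)) (0 : ℤ)]
  rw [xsW_eq]
  constructor <;> [linarith; linarith]

private lemma sum_xsW (b : ℕ → ℕ → ℤ) (k : ℕ) :
    ∑ j ∈ range k, xsW b j = PsW b k - NsW b k := by
  rw [PsW, NsW, ← Finset.sum_sub_distrib]
  exact Finset.sum_congr rfl fun j _ => (max_zero_sub_eq_self _).symm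

private lemma invW (b : ℕ → ℕ → ℤ) (hb : ∀ k j, b k j = 0 ∨ b k j = 1) :
    ∀ k, 1 ≤ k → PsW b k ≤ (Nat.fib k : ℤ) + 1 ∧ NsW b k ≤ (Nat.fib k : ℤ) - 1 ∧
      PsW b k + NsW b k ≤ (Nat.fib (k + 1) : ℤ) := by
  intro k hk
  induction k, hk using Nat.le_induction with
  | base => refine ⟨?_, ?_, ?_⟩ <;> simp [PsW, NsW, xsW_zero, Nat.fib_one, Nat.fib_two]
  | succ k hk ih =>
    obtain ⟨hP, hN, hT⟩ := ih
    have hP1 : 1 ≤ PsW b k := PsW_one_le b k hk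
    have hN0 : 0 ≤ NsW b k := NsW_nonneg b k
    obtain ⟨hxl, hxu⟩ := xsW_bounds b hb k
    have hPs : PsW b (k + 1) = PsW b k + max (xsW b k) 0 := Finset.sum_range_succ _ _
    have hNs : NsW b (k + 1) = NsW b k + max (-(xsW b k)) 0 := Finset.sum_range_succ _ _
    have hfib : (Nat.fib (k + 2) : ℤ) = Nat.fib k + Nat.fib (k + 1) := by
      rw [Nat.fib_add_two]; push_cast; ring
    have hfk : 1 ≤ (Nat.fib k : ℤ) := by
      have := Nat.fib_pos.2 (by omega : 0 < k); exact_mod_cast this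
    have hmx : max (xsW b k) 0 ≤ 1 + NsW b k := max_le hxu (by linarith)
    have hmn : max (-(xsW b k)) 0 ≤ PsW b k - 1 := max_le (by linarith) (by linarith)
    have habs : max (xsW b k) 0 + max (-(xsW b k)) 0 ≤ (Nat.fib k : ℤ) := by
      rcases le_total (xsW b k) 0 with h | h
      · rw [max_eq_right h, max_eq_left (by linarith)]; linarith
      · rw [max_eq_left h, max_eq_right (by linarith)]; linarith
    refine ⟨?_, ?_, ?_⟩
    · rw [hPs]; linarith
    · rw [hNs]; linarith
    · rw [hPs, hNs, hfib]; linarith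

private def bW (n : ℕ) (A : Matrix (Fin n) (Fin n) ℤ) (k j : ℕ) : ℤ :=
  if h : j < k ∧ k < n then (if A ⟨k, h.2⟩ ⟨j, h.1.trans h.2⟩ = 2 then 1 else 0) else 0

private lemma bW_cases (n : ℕ) (A : Matrix (Fin n) (Fin n) ℤ) (k j : ℕ) :
    bW n A k j = 0 ∨ bW n A k j = 1 := by
  unfold bW
  split
  · split
    · right; rfl
    · left; rfl
  · left; rfl

private lemma bW_zero (n : ℕ) (A : Matrix (Fin n) (Fin n) ℤ) (k j : ℕ) (h : ¬ j < k) :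
    bW n A k j = 0 := by
  unfold bW; rw [dif_neg (by tauto)]

private lemma bW_eq (n : ℕ) (A : Matrix (Fin n) (Fin n) ℤ) (i j : Fin n) (h : (j : ℕ) < (i : ℕ))
    (hA : A i j = 1 ∨ A i j = 2) : bW n A i j = A i j - 1 := by
  unfold bW
  rw [dif_pos ⟨h, i.isLt⟩]
  simp only [Fin.eta]
  rcases hA with h1 | h1 <;> rw [h1] <;> norm_num

/-- For n ≥ 3 and A ∈ W_n, 3 − F_{n-1} ≤ det(A) ≤ 3 + F_{n-1}. -/
theorem stmt_18 (n : ℕ) (hn : 3 ≤ n) (A : Matrix (Fin n) (Fin n) ℤ)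
    (hupper : ∀ i j : Fin n, (i : ℕ) < (j : ℕ) → A i j = 1)
    (hdiag : ∀ i : Fin n, A i i = 2)
    (hlower : ∀ i j : Fin n, (j : ℕ) < (i : ℕ) → A i j = 1 ∨ A i j = 2) :
    3 - (Nat.fib (n - 1) : ℤ) ≤ A.det ∧ A.det ≤ 3 + (Nat.fib (n - 1) : ℤ) := by
  set b : ℕ → ℕ → ℤ := bW n A with hb
  have hbc : ∀ k j, b k j = 0 ∨ b k j = 1 := bW_cases n A
  set B : Matrix (Fin n) (Fin n) ℤ := Matrix.of fun i j : Fin n => A i j - 1 with hB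
  set x : Fin n → ℤ := fun i : Fin n => xsW b i with hx
  have hmul : B.mulVec x = fun _ => 1 := by
    funext i
    have key : ∀ j : Fin n, (A i j - 1) * xsW b j =
        b i j * xsW b j + (if (j : ℕ) = (i : ℕ) then xsW b i else 0) := by
      intro j
      rcases lt_trichotomy (j : ℕ) (i : ℕ) with hlt | heq | hgt
      · rw [hb, ← bW_eq n A i j hlt (hlower i j hlt), if_neg (Nat.ne_of_lt hlt)]
        ring
      · have hji : j = i := Fin.ext heq
        subst hji
        rw [hdiag j, hb, bW_zero n A j j (lt_irrefl _), if_pos rfl]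
        ring
      · rw [hupper i j hgt, hb, bW_zero n A i j (by omega), if_neg (by omega)]
        ring
    have h1 : B.mulVec x i = ∑ j : Fin n, (A i j - 1) * xsW b j := by
      simp [hB, hx, Matrix.mulVec, dotProduct]
    rw [h1, Finset.sum_congr rfl fun j _ => key j,
      Fin.sum_univ_eq_sum_range
        (fun j => b i j * xsW b j + (if j = (i : ℕ) then xsW b i else 0)) n,
      Finset.sum_add_distrib, Finset.sum_ite_eq' (range n) (i : ℕ)
        (fun _ => xsW b i), if_pos (Finset.mem_range.2 i.isLt)]
    have h2 : ∑ j ∈ range n, b i j * xsW b j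
        = ∑ j ∈ range (i : ℕ), b i j * xsW b j := by
      refine (Finset.sum_subset (Finset.range_subset_range.2 i.isLt.le) ?_).symm
      intro j _ hj
      rw [hb, bW_zero n A i j (by simpa using hj), zero_mul]
    rw [h2]
    linarith [xsW_eq b (i : ℕ)]
  have hfac : B * (1 + Matrix.replicateCol Unit x * Matrix.replicateRow Unit (fun _ : Fin n => (1:ℤ))) = A := by
    ext i j
    rw [Matrix.mul_add, Matrix.mul_one, Matrix.add_apply, ← Matrix.mul_assoc,
      Matrix.mul_apply]
    have hterm : ∀ k : Unit, (B * Matrix.replicateCol Unit x) i k *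
        Matrix.replicateRow Unit (fun _ : Fin n => (1:ℤ)) k j = 1 := by
      intro k
      have : (B * Matrix.replicateCol Unit x) i k = B.mulVec x i := by
        simp [Matrix.mul_apply, Matrix.replicateCol_apply, Matrix.mulVec, dotProduct]
      rw [this, hmul]
      simp [Matrix.replicateRow_apply]
    rw [Finset.sum_congr rfl fun k _ => hterm k]
    simp [hB]
  have hdet1 : B.det = 1 := by
    rw [Matrix.det_of_lowerTriangular B ?_]
    · have : ∀ i : Fin n, B i i = 1 := fun i => by simp [hB, hdiag i]
      simp [this]
    · intro i j hij
      have : (i : ℕ) < (j : ℕ) := hij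
      simp [hB, hupper i j this]
  have hdet : A.det = 1 + ∑ j ∈ range n, xsW b j := by
    calc A.det = (B * (1 + Matrix.replicateCol Unit x * Matrix.replicateRow Unit (fun _ : Fin n => (1:ℤ)))).det := by
          rw [hfac]
      _ = 1 + ∑ j ∈ range n, xsW b j := by
          rw [Matrix.det_mul, hdet1, one_mul, Matrix.det_one_add_replicateCol_mul_replicateRow]
          rw [show dotProduct (fun _ : Fin n => (1:ℤ)) x = ∑ i : Fin n, x i by
            simp [dotProduct]]
          rw [hx, Fin.sum_univ_eq_sum_range (fun j => xsW b j) n]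
  -- final bounds
  obtain ⟨m, rfl⟩ : ∃ m, n = m + 1 := ⟨n - 1, by omega⟩
  have hm1 : 1 ≤ m := by omega
  obtain ⟨hP, hN, _⟩ := invW b hbc m hm1
  have hP1 : 1 ≤ PsW b m := PsW_one_le b m hm1
  have hN0 : 0 ≤ NsW b m := NsW_nonneg b m
  obtain ⟨hxl, hxu⟩ := xsW_bounds b hbc m
  have hS : ∑ j ∈ range (m + 1), xsW b j = (PsW b m - NsW b m) + xsW b m := by
    rw [Finset.sum_range_succ, sum_xsW]
  have hnm : m + 1 - 1 = m := by omega
  rw [hnm]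
  rw [hdet, hS]
  constructor <;> linarith
end
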